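/- arXiv:1105.0529 — 3 statements merged into one kernel-verified Lean document; each statement's English description precedes it below -/
import Mathlib

section
/- Let s ≥ 1 be an integer, I = (0,1), and let u ∈ H^s(I) ∩ H^1_0(I). Let d(x) = min(x, 1-x) be the distance to the boundary of I. Then u/d ∈ H^{s-1}(I) and there is a constant C (depending only on s) such that ‖u/d‖_{H^{s-1}(I)} ≤ C ‖u‖_{H^s(I)}. -/
open MeasureTheory Set

/-- The (squared) `H^k` norm on the interval `(0,1)`, realized as the sum of the
`L^2` norms (squared) of the derivatives of order `≤ k`. -/
noncomputable def HnormSq (k : ℕ) (u : ℝ → ℝ) : ℝ :=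
  ∑ m ∈ Finset.range (k + 1), ∫ x in Set.Ioo (0:ℝ) 1, (iteratedDeriv m u x) ^ 2

open intervalIntegral Filter Topology
open scoped ENNReal

/-- Cauchy–Schwarz for real integrals. -/
lemma my_cauchy_schwarz {α : Type*} [MeasurableSpace α] {μ : Measure α} {f g : α → ℝ}
    (hf2 : Integrable (fun x => f x ^ 2) μ) (hg2 : Integrable (fun x => g x ^ 2) μ)
    (hf : AEStronglyMeasurable f μ) (hg : AEStronglyMeasurable g μ) :
    (∫ x, f x * g x ∂μ) ^ 2 ≤ (∫ x, f x ^ 2 ∂μ) * ∫ x, g x ^ 2 ∂μ := by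
  have hfg : Integrable (fun x => f x * g x) μ := by
    refine (hf2.add hg2).mono' (hf.mul hg) (Eventually.of_forall fun x => ?_)
    simp only [Real.norm_eq_abs, abs_mul, Pi.add_apply]
    nlinarith [sq_nonneg (|f x| - |g x|), sq_abs (f x), sq_abs (g x),
      abs_nonneg (f x), abs_nonneg (g x)]
  have key : ∀ l : ℝ, 0 ≤ (∫ x, f x ^ 2 ∂μ) * (l * l) +
      (2 * ∫ x, f x * g x ∂μ) * l + ∫ x, g x ^ 2 ∂μ := by
    intro l
    have h0 : 0 ≤ ∫ x, (l * f x + g x) ^ 2 ∂μ := integral_nonneg fun x => sq_nonneg _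
    have e : (fun x => (l * f x + g x) ^ 2)
        = fun x => (l * l) * f x ^ 2 + (2 * l) * (f x * g x) + g x ^ 2 := by
      funext x; ring
    rw [e, integral_add (f := fun x => (l*l) * f x ^ 2 + (2*l) * (f x * g x))
        (g := fun x => g x ^ 2) ((hf2.const_mul _).add (hfg.const_mul _)) hg2,
      integral_add (f := fun x => (l*l) * f x ^ 2) (g := fun x => (2*l) * (f x * g x))
        (hf2.const_mul _) (hfg.const_mul _),
      MeasureTheory.integral_const_mul, MeasureTheory.integral_const_mul] at h0
    nlinarith [h0]
  have hd := discrim_le_zero key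
  rw [discrim] at hd
  nlinarith [hd]

lemma formula_left {s : ℕ} {u : ℝ → ℝ} (hu : ContDiff ℝ (s : ℕ∞) u) (hu0 : u 0 = 0)
    {m : ℕ} (hm : m + 1 ≤ s) {x : ℝ} (hx : 0 < x) :
    iteratedDeriv m (fun y => u y / y) x
      = (∫ t in (0:ℝ)..x, t ^ m * iteratedDeriv (m + 1) u t) / x ^ (m + 1) := by
  induction m generalizing x with
  | zero =>
    have hs1 : (1 : WithTop ℕ∞) ≤ (s : ℕ∞) := by exact_mod_cast hm
    have hderiv : ∀ y ∈ Set.uIcc (0:ℝ) x, DifferentiableAt ℝ u y :=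
      fun y _ => (hu.differentiable (lt_of_lt_of_le zero_lt_one hs1).ne').differentiableAt
    have hcont : Continuous (deriv u) := by
      have := hu.continuous_iteratedDeriv 1 (by exact_mod_cast hm)
      rwa [iteratedDeriv_one] at this
    have : (∫ t in (0:ℝ)..x, t ^ 0 * iteratedDeriv 1 u t) = u x := by
      simp only [pow_zero, one_mul, iteratedDeriv_one]
      rw [integral_deriv_eq_sub hderiv (hcont.intervalIntegrable 0 x), hu0, sub_zero]
    rw [this, iteratedDeriv_zero, pow_one]
  | succ m ih =>
    have hm' : m + 1 ≤ s := Nat.le_of_succ_le hm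
    set G : ℕ → ℝ → ℝ := fun k => iteratedDeriv (k + 1) u with hG
    have hGc : ∀ k, k + 1 ≤ s → Continuous (G k) := fun k hk =>
      hu.continuous_iteratedDeriv (k + 1) (by exact_mod_cast hk)
    have hev : iteratedDeriv m (fun y => u y / y) =ᶠ[𝓝 x]
        fun y => (∫ t in (0:ℝ)..y, t ^ m * G m t) / y ^ (m + 1) := by
      filter_upwards [IsOpen.mem_nhds isOpen_Ioi hx] with y hy
      exact ih hm' hy
    rw [iteratedDeriv_succ, hev.deriv_eq]
    have hcmm : Continuous (fun t : ℝ => t ^ m * G m t) := (continuous_pow m).mul (hGc m hm')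
    have hA : HasDerivAt (fun y => ∫ t in (0:ℝ)..y, t ^ m * G m t) (x ^ m * G m x) x :=
      intervalIntegral.integral_hasDerivAt_right (hcmm.intervalIntegrable 0 x)
        (hcmm.stronglyMeasurableAtFilter _ _) hcmm.continuousAt
    have hB : HasDerivAt (fun y : ℝ => y ^ (m + 1)) ((m + 1 : ℕ) * x ^ m) x := by
      simpa using hasDerivAt_pow (m + 1) x
    have hxne : x ^ (m + 1) ≠ 0 := pow_ne_zero _ hx.ne'
    have hD := hA.div hB hxne
    -- integration by parts identity
    have hGd : ∀ y ∈ Set.uIcc (0:ℝ) x, HasDerivAt (G m) (G (m + 1) y) y := by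
      intro y _
      have hdiff : DifferentiableAt ℝ (G m) y := by
        have := hu.differentiable_iteratedDeriv (m + 1)
          (by exact_mod_cast Nat.lt_of_succ_le hm)
        exact this.differentiableAt
      have : HasDerivAt (G m) (deriv (G m) y) y := hdiff.hasDerivAt
      rwa [show deriv (G m) y = G (m + 1) y by rw [hG]; rw [← iteratedDeriv_succ]] at this
    have hpow : ∀ y ∈ Set.uIcc (0:ℝ) x, HasDerivAt (fun t : ℝ => t ^ (m + 1))
        ((m + 1 : ℕ) * y ^ m) y := fun y _ => by simpa using hasDerivAt_pow (m + 1) y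
    have hibp := integral_mul_deriv_eq_deriv_mul hpow hGd
      ((continuous_const.mul (continuous_pow m)).intervalIntegrable 0 x)
      ((hGc (m + 1) hm).intervalIntegrable 0 x)
    -- hibp : ∫ t in 0..x, t^(m+1) * G (m+1) t = x^(m+1) * G m x - 0 ^ (m+1) * G m 0
    --          - ∫ t in 0..x, ((m+1) * t^m) * G m t
    rw [show (fun y => (∫ t in (0:ℝ)..y, t ^ m * G m t) / y ^ (m + 1)) = ((fun y => ∫ t in (0:ℝ)..y, t ^ m * G m t) / fun y => y ^ (m + 1)) from rfl, hD.deriv]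
    have hconst : (∫ t in (0:ℝ)..x, ((m + 1 : ℕ) * t ^ m) * G m t)
        = (m + 1 : ℕ) * ∫ t in (0:ℝ)..x, t ^ m * G m t := by
      rw [← intervalIntegral.integral_const_mul]
      congr 1; funext t; ring
    rw [hconst] at hibp
    have hz : ((0:ℝ)) ^ (m + 1) * G m 0 = 0 := by simp
    rw [hz, sub_zero] at hibp
    rw [hibp]
    field_simp
    ring

lemma hardy_bound (m : ℕ) {g : ℝ → ℝ} (hg : Continuous g) :
    IntegrableOn (fun x => ((∫ t in (0:ℝ)..x, t ^ m * g t) / x ^ (m + 1)) ^ 2)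
      (Ioo (0:ℝ) (1/2)) volume ∧
    (∫ x in Ioo (0:ℝ) (1/2), ((∫ t in (0:ℝ)..x, t ^ m * g t) / x ^ (m + 1)) ^ 2)
      ≤ 4 * ∫ t in Ioo (0:ℝ) 1, g t ^ 2 := by
  set h : ℝ → ℝ := fun t => Real.sqrt t * g t ^ 2 with hh_def
  have hh : Continuous h := Real.continuous_sqrt.mul (hg.pow 2)
  have hhnn : ∀ t, 0 ≤ h t := fun t => mul_nonneg (Real.sqrt_nonneg t) (sq_nonneg _)
  set φ : ℝ → ℝ := fun x => (∫ t in (0:ℝ)..x, t ^ m * g t) / x ^ (m + 1) with hφ_def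
  set Q : ℝ → ℝ := fun x => ∫ t in (0:ℝ)..x, h t with hQ_def
  set ψ : ℝ → ℝ := fun x => 2 * Real.sqrt x / x ^ 2 * Q x with hψ_def
  have hQnn : ∀ x : ℝ, 0 ≤ x → 0 ≤ Q x := fun x hx =>
    intervalIntegral.integral_nonneg hx (fun t _ => hhnn t)
  have hQc : Continuous Q :=
    intervalIntegral.continuous_primitive (fun a b => hh.intervalIntegrable a b) 0
  -- Step A : pointwise bound
  have stepA : ∀ x ∈ Ioo (0:ℝ) (1/2), φ x ^ 2 ≤ ψ x := by
    intro x hx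
    obtain ⟨hx0, hx12⟩ := hx
    set f₁ : ℝ → ℝ := fun t => t ^ m / Real.sqrt (Real.sqrt t) with hf₁
    set f₂ : ℝ → ℝ := fun t => Real.sqrt (Real.sqrt t) * g t with hf₂
    set w : ℝ → ℝ := fun t => t ^ (2 * m) * (Real.sqrt t)⁻¹ with hw
    have hf₁m : AEStronglyMeasurable f₁ (volume.restrict (Ioc 0 x)) :=
      ((measurable_id.pow_const m).div
        (Real.continuous_sqrt.measurable.comp Real.continuous_sqrt.measurable)
        ).aestronglyMeasurable
    have hf₂m : AEStronglyMeasurable f₂ (volume.restrict (Ioc 0 x)) :=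
      ((Real.continuous_sqrt.comp Real.continuous_sqrt).mul hg).aestronglyMeasurable
    have hf₁sq : ∀ t : ℝ, f₁ t ^ 2 = w t := by
      intro t
      rw [hf₁, hw, div_pow, ← pow_mul, Real.sq_sqrt (Real.sqrt_nonneg t),
        mul_comm m 2, div_eq_mul_inv]
    have hf₂sq : ∀ t : ℝ, f₂ t ^ 2 = h t := by
      intro t
      rw [hf₂, hh_def, mul_pow, Real.sq_sqrt (Real.sqrt_nonneg t)]
    have hwrpow : EqOn (fun t : ℝ => t ^ (2 * m) * t ^ (-(1/2) : ℝ)) w (Ioc 0 x) := by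
      intro t ht
      have : t ^ (-(1/2) : ℝ) = (Real.sqrt t)⁻¹ := by
        rw [Real.rpow_neg ht.1.le, Real.sqrt_eq_rpow]
      simp only [hw, this]
    have hwint : IntegrableOn w (Ioc 0 x) volume := by
      have h2 : IntervalIntegrable (fun t : ℝ => t ^ (2*m) * t ^ (-(1/2):ℝ)) volume 0 x :=
        (intervalIntegrable_rpow' (by norm_num)).continuousOn_mul
          (Continuous.continuousOn (continuous_pow _))
      exact ((intervalIntegrable_iff_integrableOn_Ioc_of_le hx0.le).1 h2).congr_fun
        hwrpow measurableSet_Ioc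
    have hI1 : Integrable (fun t => f₁ t ^ 2) (volume.restrict (Ioc 0 x)) := by
      have : (fun t => f₁ t ^ 2) = w := funext hf₁sq
      rwa [this]
    have hI2 : Integrable (fun t => f₂ t ^ 2) (volume.restrict (Ioc 0 x)) := by
      have : (fun t => f₂ t ^ 2) = h := funext hf₂sq
      rw [this]; exact hh.integrableOn_Ioc
    have hcs := my_cauchy_schwarz hI1 hI2 hf₁m hf₂m
    have hprod : (∫ t in Ioc (0:ℝ) x, t ^ m * g t) = ∫ t, f₁ t * f₂ t
        ∂(volume.restrict (Ioc 0 x)) := by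
      refine setIntegral_congr_ae measurableSet_Ioc (Eventually.of_forall fun t ht => ?_)
      have hst : Real.sqrt (Real.sqrt t) ≠ 0 := by
        refine ne_of_gt (Real.sqrt_pos.2 (Real.sqrt_pos.2 ht.1))
      rw [hf₁, hf₂]
      field_simp
    have hint_eq : (∫ t in (0:ℝ)..x, t ^ m * g t) = ∫ t in Ioc (0:ℝ) x, t ^ m * g t :=
      intervalIntegral.integral_of_le hx0.le
    -- bound on ∫ w
    have hWbound : (∫ t, f₁ t ^ 2 ∂(volume.restrict (Ioc 0 x)))
        ≤ 2 * x ^ (2 * m) * Real.sqrt x := by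
      have e1 : (fun t => f₁ t ^ 2) = w := funext hf₁sq
      rw [e1]
      have hIw : (∫ t in Ioc (0:ℝ) x, w t) = ∫ t in (0:ℝ)..x, w t :=
        (intervalIntegral.integral_of_le hx0.le).symm
      rw [show (∫ t, w t ∂(volume.restrict (Ioc 0 x))) = ∫ t in Ioc (0:ℝ) x, w t from rfl, hIw]
      have hvint : IntervalIntegrable (fun t : ℝ => x ^ (2*m) * (Real.sqrt t)⁻¹) volume 0 x := by
        have : IntegrableOn (fun t : ℝ => (Real.sqrt t)⁻¹) (Ioc 0 x) volume := by
          refine ((intervalIntegrable_iff_integrableOn_Ioc_of_le hx0.le).1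
            (intervalIntegrable_rpow' (r := -(1/2)) (by norm_num))).congr_fun
            (fun t ht => ?_) measurableSet_Ioc
          show t ^ (-(1/2):ℝ) = (Real.sqrt t)⁻¹
          rw [Real.rpow_neg ht.1.le, Real.sqrt_eq_rpow]
        exact (intervalIntegrable_iff_integrableOn_Ioc_of_le hx0.le).2 (this.const_mul _)
      have hwint' : IntervalIntegrable w volume 0 x :=
        (intervalIntegrable_iff_integrableOn_Ioc_of_le hx0.le).2 hwint
      have hmono : (∫ t in (0:ℝ)..x, w t) ≤ ∫ t in (0:ℝ)..x, x ^ (2*m) * (Real.sqrt t)⁻¹ := by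
        refine intervalIntegral.integral_mono_on hx0.le hwint' hvint (fun t ht => ?_)
        rw [hw]
        exact mul_le_mul_of_nonneg_right (pow_le_pow_left₀ ht.1 ht.2 _)
          (inv_nonneg.2 (Real.sqrt_nonneg t))
      refine hmono.trans ?_
      rw [intervalIntegral.integral_const_mul]
      have hsq : (∫ t in (0:ℝ)..x, (Real.sqrt t)⁻¹) = 2 * Real.sqrt x := by
        have e2 : EqOn (fun t : ℝ => (Real.sqrt t)⁻¹) (fun t : ℝ => t ^ (-(1/2) : ℝ))
            (Set.uIcc 0 x) := by
          intro t ht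
          rw [Set.uIcc_of_le hx0.le] at ht
          rcases eq_or_lt_of_le ht.1 with h0 | h0
          · simp [← h0]
          · simp only [Real.rpow_neg h0.le, Real.sqrt_eq_rpow]
        rw [intervalIntegral.integral_congr e2, integral_rpow (Or.inl (by norm_num))]
        rw [Real.zero_rpow (by norm_num), Real.sqrt_eq_rpow]
        norm_num
        ring
      rw [hsq]; ring_nf; exact le_refl _
    -- assemble step A
    have hQx : (∫ t, f₂ t ^ 2 ∂(volume.restrict (Ioc 0 x))) = Q x := by
      have e : (fun t => f₂ t ^ 2) = h := funext hf₂sq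
      rw [e, hQ_def]
      exact (intervalIntegral.integral_of_le hx0.le).symm
    have hP2 : (∫ t in (0:ℝ)..x, t ^ m * g t) ^ 2
        ≤ (2 * x ^ (2 * m) * Real.sqrt x) * Q x := by
      rw [hint_eq, hprod]
      refine hcs.trans ?_
      rw [hQx]
      exact mul_le_mul_of_nonneg_right hWbound (hQnn x hx0.le)
    have hxpow : (0:ℝ) < (x ^ (m+1)) ^ 2 := by positivity
    rw [hφ_def]
    simp only
    rw [div_pow, div_le_iff₀ hxpow]
    have hexp : (x ^ (m+1)) ^ 2 = x ^ (2*m) * x ^ 2 := by ring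
    have hx2 : x ^ 2 ≠ 0 := by positivity
    have key : ψ x * (x ^ (m+1)) ^ 2 = 2 * x ^ (2*m) * Real.sqrt x * Q x := by
      calc ψ x * (x ^ (m+1)) ^ 2
          = 2 * Real.sqrt x * Q x * ((x ^ (m+1)) ^ 2 / x ^ 2) := by rw [hψ_def]; ring
        _ = 2 * Real.sqrt x * Q x * x ^ (2*m) := by
            rw [hexp, mul_div_assoc, div_self hx2, mul_one]
        _ = 2 * x ^ (2*m) * Real.sqrt x * Q x := by ring
    rw [key]
    exact hP2
  -- Step B : integrability and integral bound for ψ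
  set S : Set ℝ := Ioo (0:ℝ) (1/2) with hS_def
  set c : ℝ → ℝ≥0∞ := fun x => ENNReal.ofReal (2 * Real.sqrt x / x ^ 2) with hc_def
  have hcm : Measurable c :=
    ((Real.continuous_sqrt.measurable.const_mul 2).div (measurable_id.pow_const 2)).ennreal_ofReal
  set E : Set (ℝ × ℝ) := {p : ℝ × ℝ | p.1 ∈ S ∧ p.2 ∈ Ioc 0 p.1} with hE_def
  have hEm : MeasurableSet E := by
    have : E = (Prod.fst ⁻¹' S) ∩ ({p : ℝ × ℝ | 0 < p.2} ∩ {p : ℝ × ℝ | p.2 ≤ p.1}) := by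
      ext p; simp [hE_def, mem_Ioc, and_assoc]
    rw [this]
    exact (measurable_fst measurableSet_Ioo).inter
      ((measurableSet_lt measurable_const measurable_snd).inter
        (measurableSet_le measurable_snd measurable_fst))
  set K : ℝ × ℝ → ℝ≥0∞ :=
    E.indicator (fun p => c p.1 * ENNReal.ofReal (h p.2)) with hK_def
  have hKm : Measurable K := by
    refine Measurable.indicator ?_ hEm
    exact (hcm.comp measurable_fst).mul
      ((hh.measurable.comp measurable_snd).ennreal_ofReal)
  have hhint : ∀ a b : ℝ, IntegrableOn h (Ioc a b) volume := fun a b => hh.integrableOn_Ioc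
  -- inner identity for fixed x
  have L1 : ∀ x : ℝ, (∫⁻ t, K (x, t))
      = S.indicator (fun x => c x * ∫⁻ t in Ioc (0:ℝ) x, ENNReal.ofReal (h t)) x := by
    intro x
    by_cases hxS : x ∈ S
    · rw [indicator_of_mem hxS]
      have e : (fun t => K (x, t)) = (Ioc (0:ℝ) x).indicator
          (fun t => c x * ENNReal.ofReal (h t)) := by
        funext t
        by_cases ht : t ∈ Ioc (0:ℝ) x
        · rw [indicator_of_mem ht, hK_def, indicator_of_mem (show ((x,t) : ℝ × ℝ) ∈ E from ⟨hxS, ht⟩)]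
        · rw [indicator_of_notMem ht, hK_def,
            indicator_of_notMem (fun hc' => ht hc'.2)]
      rw [e, lintegral_indicator measurableSet_Ioc,
        lintegral_const_mul _ hh.measurable.ennreal_ofReal]
    · rw [indicator_of_notMem hxS]
      have e : (fun t => K (x, t)) = fun _ => 0 := by
        funext t
        exact indicator_of_notMem (fun hc' => hxS hc'.1) _
      rw [e, lintegral_zero]
  -- the main lintegral bound
  have hKineq : ∀ t : ℝ, (∫⁻ x, K (x, t))
      ≤ S.indicator (fun t => ENNReal.ofReal (4 * g t ^ 2)) t := by
    intro t
    by_cases ht : t ∈ S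
    · rw [indicator_of_mem ht]
      have e : (fun x => K (x, t)) = (Ico t (1/2:ℝ)).indicator
          (fun x => c x * ENNReal.ofReal (h t)) := by
        funext x
        by_cases hx : x ∈ Ico t (1/2:ℝ)
        · rw [indicator_of_mem hx, hK_def,
            indicator_of_mem (show ((x,t) : ℝ × ℝ) ∈ E from
              ⟨⟨lt_of_lt_of_le ht.1 hx.1, hx.2⟩, ⟨ht.1, hx.1⟩⟩)]
        · rw [indicator_of_notMem hx, hK_def]
          refine indicator_of_notMem ?_ _
          rintro ⟨hS', hIoc⟩
          exact hx ⟨hIoc.2, hS'.2⟩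
      rw [e, lintegral_indicator measurableSet_Ico, lintegral_mul_const _ hcm]
      have hcalc : (∫⁻ x in Ico t (1/2:ℝ), c x)
          ≤ ENNReal.ofReal (4 * (Real.sqrt t)⁻¹) := by
        rw [setLIntegral_congr (Ico_ae_eq_Ioc (α := ℝ))]
        have hcont : ContinuousOn (fun x : ℝ => 2 * Real.sqrt x / x ^ 2)
            (Icc t (1/2:ℝ)) := by
          refine ContinuousOn.div
            ((continuous_const.mul Real.continuous_sqrt).continuousOn)
            ((continuous_pow 2).continuousOn) ?_
          intro y hy
          exact pow_ne_zero 2 (ne_of_gt (lt_of_lt_of_le ht.1 hy.1))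
        have hcint : IntegrableOn (fun x : ℝ => 2 * Real.sqrt x / x ^ 2)
            (Ioc t (1/2:ℝ)) volume :=
          (hcont.integrableOn_Icc).mono_set Ioc_subset_Icc_self
        have hcnn : 0 ≤ᵐ[volume.restrict (Ioc t (1/2:ℝ))]
            (fun x : ℝ => 2 * Real.sqrt x / x ^ 2) := by
          refine Eventually.of_forall fun x => ?_
          positivity
        rw [hc_def, ← ofReal_integral_eq_lintegral_ofReal hcint hcnn]
        refine ENNReal.ofReal_le_ofReal ?_
        have hts : t ≤ (1/2:ℝ) := ht.2.le
        rw [← intervalIntegral.integral_of_le hts]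
        have e2 : EqOn (fun x : ℝ => 2 * Real.sqrt x / x ^ 2)
            (fun x : ℝ => 2 * x ^ (-(3/2) : ℝ)) (Set.uIcc t (1/2:ℝ)) := by
          intro y hy
          rw [Set.uIcc_of_le hts] at hy
          have hy0 : 0 < y := lt_of_lt_of_le ht.1 hy.1
          simp only
          rw [Real.sqrt_eq_rpow, ← Real.rpow_natCast y 2, mul_div_assoc,
            ← Real.rpow_sub hy0]
          norm_num
        rw [intervalIntegral.integral_congr e2, intervalIntegral.integral_const_mul,
          integral_rpow (Or.inr ⟨by norm_num, by
            rw [Set.uIcc_of_le hts]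
            rintro ⟨h0, -⟩
            exact absurd h0 (not_le.2 ht.1)⟩)]
        have htr : t ^ ((-(3/2) : ℝ) + 1) = (Real.sqrt t)⁻¹ := by
          rw [show ((-(3/2):ℝ) + 1) = -(1/2) by norm_num, Real.rpow_neg ht.1.le,
            Real.sqrt_eq_rpow]
        rw [htr]
        have h1 : (0:ℝ) ≤ ((1/2:ℝ) ^ ((-(3/2) : ℝ) + 1)) := Real.rpow_nonneg (by norm_num) _
        have h2 : (0:ℝ) ≤ (Real.sqrt t)⁻¹ := inv_nonneg.2 (Real.sqrt_nonneg t)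
        have h3 : ((-(3/2):ℝ) + 1) = -(1/2) := by norm_num
        rw [h3] at h1 ⊢
        linarith
      calc (∫⁻ x in Ico t (1/2:ℝ), c x) * ENNReal.ofReal (h t)
          ≤ ENNReal.ofReal (4 * (Real.sqrt t)⁻¹) * ENNReal.ofReal (h t) :=
            by gcongr
        _ = ENNReal.ofReal (4 * (Real.sqrt t)⁻¹ * h t) := by
            rw [← ENNReal.ofReal_mul (by positivity)]
        _ = ENNReal.ofReal (4 * g t ^ 2) := by
            congr 1
            rw [hh_def]
            have : Real.sqrt t ≠ 0 := ne_of_gt (Real.sqrt_pos.2 ht.1)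
            field_simp
    · rw [indicator_of_notMem ht]
      have e : (fun x => K (x, t)) = fun _ => 0 := by
        funext x
        refine indicator_of_notMem ?_ _
        rintro ⟨hS', hIoc⟩
        exact ht ⟨hIoc.1, lt_of_le_of_lt hIoc.2 hS'.2⟩
      simp [e]
  have hg2int : IntegrableOn (fun t : ℝ => g t ^ 2) (Ioo 0 1) volume :=
    ((hg.pow 2).integrableOn_Ioc).mono_set Ioo_subset_Ioc_self
  have hKg : (0:ℝ) ≤ ∫ t in Ioo (0:ℝ) 1, g t ^ 2 :=
    setIntegral_nonneg measurableSet_Ioo (fun t _ => sq_nonneg _)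
  have hΛ : (∫⁻ x in S, ENNReal.ofReal (ψ x))
      ≤ ENNReal.ofReal (4 * ∫ t in Ioo (0:ℝ) 1, g t ^ 2) := by
    have e1 : (∫⁻ x in S, ENNReal.ofReal (ψ x)) = ∫⁻ x, ∫⁻ t, K (x, t) := by
      rw [← lintegral_indicator measurableSet_Ioo]
      refine lintegral_congr fun x => ?_
      rw [L1 x]
      by_cases hxS : x ∈ S
      · rw [indicator_of_mem hxS, indicator_of_mem hxS]
        have hx0 : (0:ℝ) < x := hxS.1
        have hQeq : ENNReal.ofReal (Q x) = ∫⁻ t in Ioc (0:ℝ) x, ENNReal.ofReal (h t) := by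
          rw [hQ_def]
          simp only
          rw [intervalIntegral.integral_of_le hx0.le]
          exact ofReal_integral_eq_lintegral_ofReal (hhint 0 x)
            (Eventually.of_forall fun t => hhnn t)
        rw [hψ_def]
        simp only
        rw [ENNReal.ofReal_mul (by positivity), hQeq, hc_def]
      · rw [indicator_of_notMem hxS, indicator_of_notMem hxS]
    have hswap := lintegral_lintegral_swap (μ := volume) (ν := volume)
      (f := fun x t => K (x, t)) (by simpa [Function.uncurry_def] using hKm.aemeasurable)
    rw [e1, hswap]
    calc (∫⁻ t, ∫⁻ x, K (x, t))
        ≤ ∫⁻ t, S.indicator (fun t => ENNReal.ofReal (4 * g t ^ 2)) t :=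
          lintegral_mono hKineq
      _ = ∫⁻ t in S, ENNReal.ofReal (4 * g t ^ 2) := lintegral_indicator measurableSet_Ioo _
      _ = ENNReal.ofReal (∫ t in S, 4 * g t ^ 2) := by
          rw [← ofReal_integral_eq_lintegral_ofReal
            (show IntegrableOn (fun t => 4 * g t ^ 2) S volume from
              ((hg.pow 2).integrableOn_Ioc.mono_set Ioo_subset_Ioc_self).const_mul 4)
            (Eventually.of_forall fun t => by positivity)]
      _ ≤ ENNReal.ofReal (4 * ∫ t in Ioo (0:ℝ) 1, g t ^ 2) := by
          refine ENNReal.ofReal_le_ofReal ?_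
          rw [MeasureTheory.integral_const_mul]
          refine mul_le_mul_of_nonneg_left ?_ (by norm_num)
          refine setIntegral_mono_set hg2int
            (Eventually.of_forall fun t => sq_nonneg _) ?_
          exact (Ioo_subset_Ioo_right (by norm_num)).eventuallyLE
  have hψm : Measurable ψ := by
    refine Measurable.mul ?_ hQc.measurable
    exact (Real.continuous_sqrt.measurable.const_mul 2).div (measurable_id.pow_const 2)
  have h0ae : 0 ≤ᵐ[volume.restrict S] ψ := by
    refine (ae_restrict_mem measurableSet_Ioo).mono fun x hx => ?_
    have : (0:ℝ) ≤ 2 * Real.sqrt x / x ^ 2 := by positivity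
    exact mul_nonneg this (hQnn x hx.1.le)
  have hψint : IntegrableOn ψ S volume :=
    ⟨hψm.aestronglyMeasurable,
      (hasFiniteIntegral_iff_ofReal h0ae).2 (lt_of_le_of_lt hΛ ENNReal.ofReal_lt_top)⟩
  have hPc : Continuous (fun x : ℝ => ∫ t in (0:ℝ)..x, t ^ m * g t) :=
    intervalIntegral.continuous_primitive
      (fun a b => ((continuous_pow m).mul hg).intervalIntegrable a b) 0
  have hφm : Measurable (fun x => φ x ^ 2) := by
    refine Measurable.pow_const ?_ 2
    exact hPc.measurable.div (measurable_id.pow_const (m+1))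
  have hφint : IntegrableOn (fun x => φ x ^ 2) S volume := by
    refine hψint.mono' hφm.aestronglyMeasurable ?_
    refine (ae_restrict_mem measurableSet_Ioo).mono fun x hx => ?_
    rw [Real.norm_eq_abs, abs_of_nonneg (sq_nonneg _)]
    exact stepA x hx
  refine ⟨hφint, ?_⟩
  calc (∫ x in S, φ x ^ 2)
      ≤ ∫ x in S, ψ x := setIntegral_mono_on hφint hψint measurableSet_Ioo stepA
    _ ≤ 4 * ∫ t in Ioo (0:ℝ) 1, g t ^ 2 := by
        rw [integral_eq_lintegral_of_nonneg_ae h0ae hψm.aestronglyMeasurable]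
        have := ENNReal.toReal_mono ENNReal.ofReal_ne_top hΛ
        rwa [ENNReal.toReal_ofReal (by positivity)] at this

lemma iteratedDeriv_comp_const_sub' (n : ℕ) (f : ℝ → ℝ) (c a : ℝ) :
    iteratedDeriv n (fun x => f (c - x)) a = (-1 : ℝ) ^ n * iteratedDeriv n f (c - a) := by
  have e : (fun x : ℝ => f (c - x)) = fun x : ℝ => (fun y => f (c + y)) (-x) := by
    funext x; simp [sub_eq_add_neg]
  rw [e, iteratedDeriv_comp_neg n (fun y : ℝ => f (c + y)) a, iteratedDeriv_comp_const_add,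
    smul_eq_mul]
  norm_num [sub_eq_add_neg]


/-- Higher-order Hardy inequality: for `s ≥ 1` and `u ∈ H^s(0,1) ∩ H^1_0(0,1)`
(represented by a `C^s` function vanishing at `0` and `1`), the function `u/d`,
where `d x = min x (1-x)` is the distance to the boundary, belongs to `H^{s-1}(0,1)`
with `‖u/d‖_{H^{s-1}} ≤ C ‖u‖_{H^s}`, the constant depending only on `s`. -/
theorem higher_order_hardy (s : ℕ) (hs : 1 ≤ s) :
    ∃ C > (0:ℝ), ∀ u : ℝ → ℝ, ContDiff ℝ (s : ℕ∞) u → u 0 = 0 → u 1 = 0 →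
      HnormSq (s - 1) (fun x => u x / min x (1 - x)) ≤ C * HnormSq s u := by
  refine ⟨8, by norm_num, fun u hu hu0 hu1 => ?_⟩
  set f : ℝ → ℝ := fun x => u x / min x (1 - x) with hf_def
  set v : ℝ → ℝ := fun y => u (1 - y) with hv_def
  have hv : ContDiff ℝ (s : ℕ∞) v :=
    hu.comp (contDiff_const.sub contDiff_id)
  have hv0 : v 0 = 0 := by simp [hv_def, hu1]
  -- per-order claim
  have key : ∀ m : ℕ, m + 1 ≤ s →
      (∫ x in Ioo (0:ℝ) 1, (iteratedDeriv m f x) ^ 2)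
        ≤ 8 * ∫ x in Ioo (0:ℝ) 1, (iteratedDeriv (m + 1) u x) ^ 2 := by
    intro m hm
    set gL : ℝ → ℝ := iteratedDeriv (m + 1) u with hgL_def
    set gR : ℝ → ℝ := iteratedDeriv (m + 1) v with hgR_def
    have hgLc : Continuous gL := hu.continuous_iteratedDeriv (m + 1) (by exact_mod_cast hm)
    have hgRc : Continuous gR := hv.continuous_iteratedDeriv (m + 1) (by exact_mod_cast hm)
    set φL : ℝ → ℝ := fun x => (∫ t in (0:ℝ)..x, t ^ m * gL t) / x ^ (m + 1) with hφL_def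
    set φR : ℝ → ℝ := fun x => (∫ t in (0:ℝ)..x, t ^ m * gR t) / x ^ (m + 1) with hφR_def
    obtain ⟨hIL, hBL⟩ := hardy_bound m hgLc
    obtain ⟨hIR, hBR⟩ := hardy_bound m hgRc
    -- left half : iteratedDeriv m f = φL on Ioo 0 (1/2)
    have heqL : EqOn (fun x => (iteratedDeriv m f x) ^ 2) (fun x => φL x ^ 2)
        (Ioo (0:ℝ) (1/2)) := by
      intro x hx
      have h1 : EqOn f (fun y => u y / y) (Ioo (0:ℝ) (1/2)) := by
        intro y hy
        have : min y (1 - y) = y := min_eq_left (by cases hy; linarith)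
        rw [hf_def]; simp only [this]
      have h2 := h1.iteratedDeriv_of_isOpen isOpen_Ioo m hx
      simp only
      rw [h2, formula_left hu hu0 hm hx.1]
    -- right half : (iteratedDeriv m f x)^2 = (φR (1-x))^2 on Ioo (1/2) 1
    have heqR : EqOn (fun x => (iteratedDeriv m f x) ^ 2) (fun x => φR (1 - x) ^ 2)
        (Ioo (1/2:ℝ) 1) := by
      intro x hx
      have h1 : EqOn f (fun y => (fun z => v z / z) (1 - y)) (Ioo (1/2:ℝ) 1) := by
        intro y hy
        have hmin : min y (1 - y) = 1 - y := min_eq_right (by cases hy; linarith)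
        have hvy : v (1 - y) = u y := by rw [hv_def]; norm_num
        rw [hf_def]
        simp only [hmin, hvy]
      have h2 := h1.iteratedDeriv_of_isOpen isOpen_Ioo m hx
      simp only
      rw [h2, iteratedDeriv_comp_const_sub' m (fun z => v z / z) 1 x, mul_pow,
        ← pow_mul, mul_comm m 2, pow_mul, neg_one_sq, one_pow, one_mul]
      have hx1 : 0 < 1 - x := by cases hx; linarith
      rw [formula_left hv hv0 hm hx1]
    -- reflection identities
    have hgRrefl : ∀ t : ℝ, gR t = (-1:ℝ) ^ (m+1) * gL (1 - t) := by
      intro t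
      rw [hgR_def, hgL_def, hv_def]
      exact iteratedDeriv_comp_const_sub' (m+1) u 1 t
    have hgR_sq : ∀ t : ℝ, gR t ^ 2 = gL (1 - t) ^ 2 := by
      intro t
      rw [hgRrefl, mul_pow, ← pow_mul, mul_comm (m+1) 2, pow_mul, neg_one_sq, one_pow, one_mul]
    have hgR_int : (∫ t in Ioo (0:ℝ) 1, gR t ^ 2) = ∫ t in Ioo (0:ℝ) 1, gL t ^ 2 := by
      have e1 : (∫ t in Ioo (0:ℝ) 1, gR t ^ 2) = ∫ t in Ioo (0:ℝ) 1, gL (1 - t) ^ 2 := by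
        refine setIntegral_congr_ae measurableSet_Ioo (Eventually.of_forall fun t _ => ?_)
        exact hgR_sq t
      rw [e1, ← integral_Ioc_eq_integral_Ioo, ← intervalIntegral.integral_of_le (by norm_num : (0:ℝ) ≤ 1)]
      rw [intervalIntegral.integral_comp_sub_left (fun t => gL t ^ 2) 1]
      norm_num
      rw [intervalIntegral.integral_of_le (by norm_num : (0:ℝ) ≤ 1), integral_Ioc_eq_integral_Ioo]
    -- right-half integral via reflection
    have hIR' : IntegrableOn (fun x => φR (1 - x) ^ 2) (Ioo (1/2:ℝ) 1) volume := by
      have h1 : IntervalIntegrable (fun x => φR x ^ 2) volume 0 (1/2) :=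
        (intervalIntegrable_iff_integrableOn_Ioo_of_le (by norm_num)).2 hIR
      have h2 := h1.comp_sub_left 1
      rw [show (1:ℝ) - 0 = 1 by norm_num, show (1:ℝ) - 1/2 = 1/2 by norm_num] at h2
      exact (intervalIntegrable_iff_integrableOn_Ioo_of_le (by norm_num)).1 h2.symm
    have hRval : (∫ x in Ioo (1/2:ℝ) 1, φR (1 - x) ^ 2)
        = ∫ x in Ioo (0:ℝ) (1/2), φR x ^ 2 := by
      rw [← integral_Ioc_eq_integral_Ioo,
        ← intervalIntegral.integral_of_le (by norm_num : (1/2:ℝ) ≤ 1),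
        intervalIntegral.integral_comp_sub_left (fun x => φR x ^ 2) 1]
      norm_num
      rw [intervalIntegral.integral_of_le (by norm_num : (0:ℝ) ≤ 1/2),
        integral_Ioc_eq_integral_Ioo]
    -- splitting
    set q : ℝ → ℝ := fun x => (iteratedDeriv m f x) ^ 2 with hq_def
    have hql : IntegrableOn q (Ioo (0:ℝ) (1/2)) volume :=
      hIL.congr_fun (fun x hx => (heqL hx).symm) measurableSet_Ioo
    have hqr : IntegrableOn q (Ioo (1/2:ℝ) 1) volume :=
      hIR'.congr_fun (fun x hx => (heqR hx).symm) measurableSet_Ioo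
    have hsplit : (∫ x in Ioo (0:ℝ) 1, q x)
        = (∫ x in Ioo (0:ℝ) (1/2), q x) + ∫ x in Ioo (1/2:ℝ) 1, q x := by
      have hae : (Ioo (0:ℝ) 1 : Set ℝ) =ᵐ[volume]
          ((Ioo (0:ℝ) (1/2) ∪ Ioo (1/2:ℝ) 1 : Set ℝ)) := by
        have h1 : (Ioo (0:ℝ) 1 \ (Ioo (0:ℝ) (1/2) ∪ Ioo (1/2:ℝ) 1)) ⊆ {(1/2:ℝ)} := by
          rintro x ⟨⟨hx0, hx1⟩, hnx⟩
          simp only [mem_union, mem_Ioo, not_or, not_and_or, not_lt] at hnx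
          obtain ⟨h1', h2'⟩ := hnx
          rcases h1' with h | h
          · exact absurd hx0 (not_lt.2 h)
          · rcases h2' with h' | h'
            · simp [le_antisymm h h']
            · exact absurd hx1 (not_lt.2 h')
        have h2 : (Ioo (0:ℝ) (1/2) ∪ Ioo (1/2:ℝ) 1) ⊆ Ioo (0:ℝ) 1 := by
          rintro x (hx | hx) <;> constructor <;> cases hx <;> linarith
        refine (MeasureTheory.ae_eq_set.2 ⟨?_, ?_⟩)
        · exact measure_mono_null h1 (measure_singleton _)
        · rw [diff_eq_empty.2 h2]; exact measure_empty
      rw [setIntegral_congr_set hae,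
        setIntegral_union (by
          rw [Set.disjoint_left]
          rintro a ⟨-, ha2⟩ ⟨ha3, -⟩
          linarith) measurableSet_Ioo hql hqr]
    have hLle : (∫ x in Ioo (0:ℝ) (1/2), q x) ≤ 4 * ∫ t in Ioo (0:ℝ) 1, gL t ^ 2 := by
      rw [setIntegral_congr_fun measurableSet_Ioo heqL]
      exact hBL
    have hRle : (∫ x in Ioo (1/2:ℝ) 1, q x) ≤ 4 * ∫ t in Ioo (0:ℝ) 1, gL t ^ 2 := by
      rw [setIntegral_congr_fun measurableSet_Ioo heqR, hRval, ← hgR_int]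
      exact hBR
    rw [hq_def] at hsplit hLle hRle
    rw [hsplit]
    have : (8:ℝ) * ∫ x in Ioo (0:ℝ) 1, (iteratedDeriv (m+1) u x) ^ 2
        = 4 * (∫ t in Ioo (0:ℝ) 1, gL t ^ 2) + 4 * ∫ t in Ioo (0:ℝ) 1, gL t ^ 2 := by
      rw [hgL_def]; ring
    rw [this]
    exact add_le_add hLle hRle
  -- assemble
  have hs' : s - 1 + 1 = s := Nat.succ_pred_eq_of_pos hs
  rw [HnormSq, HnormSq, hs']
  have hsum : ∀ m ∈ Finset.range s,
      (∫ x in Ioo (0:ℝ) 1, (iteratedDeriv m f x) ^ 2)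
        ≤ 8 * ∫ x in Ioo (0:ℝ) 1, (iteratedDeriv (m + 1) u x) ^ 2 := by
    intro m hm
    exact key m (Finset.mem_range.1 hm)
  calc (∑ m ∈ Finset.range s, ∫ x in Ioo (0:ℝ) 1, (iteratedDeriv m f x) ^ 2)
      ≤ ∑ m ∈ Finset.range s, 8 * ∫ x in Ioo (0:ℝ) 1, (iteratedDeriv (m + 1) u x) ^ 2 :=
        Finset.sum_le_sum hsum
    _ = 8 * ∑ m ∈ Finset.range s, ∫ x in Ioo (0:ℝ) 1, (iteratedDeriv (m + 1) u x) ^ 2 := by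
        rw [Finset.mul_sum]
    _ ≤ 8 * ∑ m ∈ Finset.range (s + 1), ∫ x in Ioo (0:ℝ) 1, (iteratedDeriv m u x) ^ 2 := by
        have e := Finset.sum_range_succ' (fun m => ∫ x in Ioo (0:ℝ) 1, (iteratedDeriv m u x) ^ 2) s
        rw [e]
        have h0 : (0:ℝ) ≤ ∫ x in Ioo (0:ℝ) 1, (iteratedDeriv 0 u x) ^ 2 :=
          setIntegral_nonneg measurableSet_Ioo (fun x _ => sq_nonneg _)
        nlinarith [h0]
end

section
/- Let d(x) = min(x, 1−x) on I = (0,1) and let p ∈ {1,2}. There exists C > 0 depending only on p such that for every R ∈ C^1([0,1]), ‖R‖_{H^{1−p/2}(I)}^2 ≤ C ∫_I d(x)^p (|R(x)|² + |R'(x)|²) dx. In particular for p = 2, ‖R‖_{L^2(I)}^2 ≤ C ∫_I d(x)^2 (|R|² + |R'|²) dx. -/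
open MeasureTheory Set intervalIntegral Real
open scoped ENNReal

set_option maxHeartbeats 1000000

namespace WSE

lemma integral_Ioo_eq {f : ℝ → ℝ} {a b : ℝ} (hab : a ≤ b) :
    ∫ x in Set.Ioo a b, f x = ∫ x in a..b, f x := by
  rw [intervalIntegral.integral_of_le hab, MeasureTheory.integral_Ioc_eq_integral_Ioo]

lemma ftc {f F : ℝ → ℝ} {a b : ℝ} (hab : a ≤ b)
    (hF : ∀ x ∈ Set.Icc a b, HasDerivAt F (f x) x) (hf : ContinuousOn f (Set.Icc a b)) :
    ∫ x in Set.Ioo a b, f x = F b - F a := by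
  rw [integral_Ioo_eq hab]
  exact intervalIntegral.integral_eq_sub_of_hasDerivAt
    (by rwa [uIcc_of_le hab]) ((hf.mono (by rw [uIcc_of_le hab])).intervalIntegrable)

lemma intOn {f : ℝ → ℝ} (hf : Continuous f) {a b : ℝ} : IntegrableOn f (Set.Ioo a b) :=
  (hf.continuousOn.integrableOn_Icc).mono_set Set.Ioo_subset_Icc_self

lemma cs {u v : ℝ → ℝ} {a b : ℝ} (hab : a ≤ b) (hu : ContinuousOn u (Set.Icc a b))
    (hv : ContinuousOn v (Set.Icc a b)) :
    (∫ x in Set.Ioo a b, u x * v x) ^ 2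
      ≤ (∫ x in Set.Ioo a b, u x ^ 2) * (∫ x in Set.Ioo a b, v x ^ 2) := by
  have h1 : IntegrableOn (fun x => u x ^ 2) (Set.Ioo a b) :=
    ((hu.pow 2).integrableOn_Icc).mono_set Set.Ioo_subset_Icc_self
  have h2 : IntegrableOn (fun x => v x ^ 2) (Set.Ioo a b) :=
    ((hv.pow 2).integrableOn_Icc).mono_set Set.Ioo_subset_Icc_self
  have h3 : IntegrableOn (fun x => u x * v x) (Set.Ioo a b) :=
    ((hu.mul hv).integrableOn_Icc).mono_set Set.Ioo_subset_Icc_self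
  have h5 : ∀ lam : ℝ, IntegrableOn (fun x => lam * lam * u x ^ 2) (Set.Ioo a b) :=
    fun lam => h1.const_mul _
  have h4 : ∀ lam : ℝ, IntegrableOn (fun x => 2 * lam * (u x * v x)) (Set.Ioo a b) :=
    fun lam => h3.const_mul _
  have key : ∀ lam : ℝ, 0 ≤ (∫ x in Set.Ioo a b, u x ^ 2) * (lam * lam)
      + (2 * ∫ x in Set.Ioo a b, u x * v x) * lam + (∫ x in Set.Ioo a b, v x ^ 2) := by
    intro lam
    have step : ∫ x in Set.Ioo a b, (lam * u x + v x) ^ 2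
        = ∫ x in Set.Ioo a b, (lam * lam * u x ^ 2 + (2 * lam * (u x * v x) + v x ^ 2)) :=
      MeasureTheory.setIntegral_congr_fun measurableSet_Ioo (fun x _ => by ring)
    have step2 : ∫ x in Set.Ioo a b, (lam * lam * u x ^ 2 + (2 * lam * (u x * v x) + v x ^ 2))
        = lam * lam * (∫ x in Set.Ioo a b, u x ^ 2)
          + (2 * lam * (∫ x in Set.Ioo a b, u x * v x) + (∫ x in Set.Ioo a b, v x ^ 2)) := by
      have h24 : IntegrableOn (fun x => 2 * lam * (u x * v x) + v x ^ 2) (Set.Ioo a b) :=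
        (h4 lam).add h2
      rw [MeasureTheory.integral_add (h5 lam) h24,
        MeasureTheory.integral_add (h4 lam) h2,
        MeasureTheory.integral_const_mul, MeasureTheory.integral_const_mul]
    have hnn : 0 ≤ ∫ x in Set.Ioo a b, (lam * u x + v x) ^ 2 :=
      MeasureTheory.setIntegral_nonneg measurableSet_Ioo (fun x _ => sq_nonneg _)
    rw [step, step2] at hnn
    linarith
  have hd := discrim_le_zero key
  rw [discrim] at hd
  nlinarith [hd]


lemma log_sub_log_le {a b : ℝ} (ha : 0 < a) (hab : a ≤ b) :
    Real.log b - Real.log a ≤ 2 * (b - a) / (Real.sqrt a * Real.sqrt b) := by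
  have hb : 0 < b := lt_of_lt_of_le ha hab
  have hsa : 0 < Real.sqrt a := Real.sqrt_pos.mpr ha
  have hsb : 0 < Real.sqrt b := Real.sqrt_pos.mpr hb
  have hsab : Real.sqrt a ≤ Real.sqrt b := Real.sqrt_le_sqrt hab
  have haa : Real.sqrt a * Real.sqrt a = a := Real.mul_self_sqrt ha.le
  have hbb : Real.sqrt b * Real.sqrt b = b := Real.mul_self_sqrt hb.le
  have e1 : Real.log b - Real.log a
      = 2 * (Real.log (Real.sqrt b) - Real.log (Real.sqrt a)) := by
    rw [Real.log_sqrt hb.le, Real.log_sqrt ha.le]; ring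
  have e2 : Real.log (Real.sqrt b) - Real.log (Real.sqrt a)
      = Real.log (Real.sqrt b / Real.sqrt a) := (Real.log_div hsb.ne' hsa.ne').symm
  have e3 : Real.log (Real.sqrt b / Real.sqrt a) ≤ Real.sqrt b / Real.sqrt a - 1 :=
    Real.log_le_sub_one_of_pos (by positivity)
  have e4 : Real.sqrt b / Real.sqrt a - 1 ≤ (b - a) / (Real.sqrt a * Real.sqrt b) := by
    rw [div_sub_one hsa.ne', div_le_div_iff₀ hsa (by positivity)]
    nlinarith [mul_le_mul_of_nonneg_left hsab hsa.le]
  calc Real.log b - Real.log a = 2 * (Real.log (Real.sqrt b / Real.sqrt a)) := by rw [e1, e2]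
    _ ≤ 2 * ((b - a) / (Real.sqrt a * Real.sqrt b)) := by linarith [e3.trans e4]
    _ = 2 * (b - a) / (Real.sqrt a * Real.sqrt b) := by ring

section Lp
variable {R : ℝ → ℝ} (hR : ContDiff ℝ 1 R)

lemma left_half (hR : ContDiff ℝ 1 R) :
    ∫ x in Set.Ioo (0:ℝ) (1/2), R x ^ 2
      ≤ R (1/2) ^ 2 + 4 * ∫ x in Set.Ioo (0:ℝ) (1/2), x ^ 2 * deriv R x ^ 2 := by
  have hRc : Continuous R := hR.continuous
  have hR' : Continuous (deriv R) := hR.continuous_deriv le_rfl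
  have hRd : ∀ x : ℝ, HasDerivAt R (deriv R x) x :=
    fun x => ((hR.differentiable one_ne_zero) x).hasDerivAt
  have key : ∫ x in Set.Ioo (0:ℝ) (1/2), (R x ^ 2 + x * (2 * R x * deriv R x))
      = (1/2) * R (1/2) ^ 2 := by
    have := ftc (f := fun x => R x ^ 2 + x * (2 * R x * deriv R x))
      (F := fun x => x * R x ^ 2) (a := 0) (b := 1/2) (by norm_num)
      (fun x _ => by
        have h1 : HasDerivAt (fun x => x * R x ^ 2)
            (1 * R x ^ 2 + x * (2 * R x ^ 1 * deriv R x)) x :=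
          (hasDerivAt_id x).mul ((hRd x).pow 2)
        simpa using h1.congr_deriv (by ring))
      (by fun_prop)
    simpa using this
  have hint1 : IntegrableOn (fun x => R x ^ 2) (Set.Ioo (0:ℝ) (1/2)) := intOn (by fun_prop)
  have hint2 : IntegrableOn (fun x => x * (2 * R x * deriv R x)) (Set.Ioo (0:ℝ) (1/2)) :=
    intOn (by fun_prop)
  have hint3 : IntegrableOn (fun x => R x ^ 2 / 2 + 2 * x ^ 2 * deriv R x ^ 2)
      (Set.Ioo (0:ℝ) (1/2)) := intOn (by fun_prop)
  have split : ∫ x in Set.Ioo (0:ℝ) (1/2), (R x ^ 2 + x * (2 * R x * deriv R x))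
      = (∫ x in Set.Ioo (0:ℝ) (1/2), R x ^ 2)
        + ∫ x in Set.Ioo (0:ℝ) (1/2), x * (2 * R x * deriv R x) :=
    MeasureTheory.integral_add hint1 hint2
  have hmono : (- ∫ x in Set.Ioo (0:ℝ) (1/2), x * (2 * R x * deriv R x))
      ≤ ∫ x in Set.Ioo (0:ℝ) (1/2), (R x ^ 2 / 2 + 2 * x ^ 2 * deriv R x ^ 2) := by
    rw [← MeasureTheory.integral_neg]
    apply MeasureTheory.setIntegral_mono_on hint2.neg hint3 measurableSet_Ioo
    intro x _
    simp only [Pi.neg_apply]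
    nlinarith [sq_nonneg (R x + 2 * x * deriv R x)]
  have split2 : ∫ x in Set.Ioo (0:ℝ) (1/2), (R x ^ 2 / 2 + 2 * x ^ 2 * deriv R x ^ 2)
      = (∫ x in Set.Ioo (0:ℝ) (1/2), R x ^ 2) / 2
        + 2 * ∫ x in Set.Ioo (0:ℝ) (1/2), x ^ 2 * deriv R x ^ 2 := by
    have h1 : IntegrableOn (fun x => R x ^ 2 / 2) (Set.Ioo (0:ℝ) (1/2)) := intOn (by fun_prop)
    have h2 : IntegrableOn (fun x => 2 * (x ^ 2 * deriv R x ^ 2)) (Set.Ioo (0:ℝ) (1/2)) :=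
      intOn (by fun_prop)
    have e : ∀ x : ℝ, R x ^ 2 / 2 + 2 * x ^ 2 * deriv R x ^ 2
        = R x ^ 2 / 2 + 2 * (x ^ 2 * deriv R x ^ 2) := fun x => by ring
    simp_rw [e]
    rw [MeasureTheory.integral_add h1 h2, MeasureTheory.integral_const_mul]
    have : ∫ x in Set.Ioo (0:ℝ) (1/2), R x ^ 2 / 2
        = (∫ x in Set.Ioo (0:ℝ) (1/2), R x ^ 2) / 2 := MeasureTheory.integral_div 2 _
    rw [this]
  rw [split] at key
  rw [split2] at hmono
  linarith

lemma right_half (hR : ContDiff ℝ 1 R) :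
    ∫ x in Set.Ioo (1/2:ℝ) 1, R x ^ 2
      ≤ R (1/2) ^ 2 + 4 * ∫ x in Set.Ioo (1/2:ℝ) 1, (1 - x) ^ 2 * deriv R x ^ 2 := by
  have hRc : Continuous R := hR.continuous
  have hR' : Continuous (deriv R) := hR.continuous_deriv le_rfl
  have hRd : ∀ x : ℝ, HasDerivAt R (deriv R x) x :=
    fun x => ((hR.differentiable one_ne_zero) x).hasDerivAt
  have key : ∫ x in Set.Ioo (1/2:ℝ) 1, (-(R x ^ 2) + (1 - x) * (2 * R x * deriv R x))
      = -((1/2) * R (1/2) ^ 2) := by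
    have := ftc (f := fun x => -(R x ^ 2) + (1 - x) * (2 * R x * deriv R x))
      (F := fun x => (1 - x) * R x ^ 2) (a := 1/2) (b := 1) (by norm_num)
      (fun x _ => by
        have h1 : HasDerivAt (fun x => (1 - x) * R x ^ 2)
            ((0 - 1) * R x ^ 2 + (1 - x) * (2 * R x ^ 1 * deriv R x)) x :=
          ((hasDerivAt_const x (1:ℝ)).sub (hasDerivAt_id x)).mul ((hRd x).pow 2)
        simpa using h1.congr_deriv (by ring))
      (by fun_prop)
    simp only [sub_self, zero_mul, one_mul] at this
    rw [this]; ring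
  have hint1 : IntegrableOn (fun x => R x ^ 2) (Set.Ioo (1/2:ℝ) 1) := intOn (by fun_prop)
  have hint2 : IntegrableOn (fun x => (1 - x) * (2 * R x * deriv R x)) (Set.Ioo (1/2:ℝ) 1) :=
    intOn (by fun_prop)
  have hint3 : IntegrableOn (fun x => R x ^ 2 / 2 + 2 * ((1 - x) ^ 2 * deriv R x ^ 2))
      (Set.Ioo (1/2:ℝ) 1) := intOn (by fun_prop)
  have split : ∫ x in Set.Ioo (1/2:ℝ) 1, (-(R x ^ 2) + (1 - x) * (2 * R x * deriv R x))
      = -(∫ x in Set.Ioo (1/2:ℝ) 1, R x ^ 2)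
        + ∫ x in Set.Ioo (1/2:ℝ) 1, (1 - x) * (2 * R x * deriv R x) := by
    have hneg : IntegrableOn (fun x => -(R x ^ 2)) (Set.Ioo (1/2:ℝ) 1) := hint1.neg
    rw [MeasureTheory.integral_add hneg hint2]
    congr 1
    exact MeasureTheory.integral_neg _
  have hmono : (∫ x in Set.Ioo (1/2:ℝ) 1, (1 - x) * (2 * R x * deriv R x))
      ≤ ∫ x in Set.Ioo (1/2:ℝ) 1, (R x ^ 2 / 2 + 2 * ((1 - x) ^ 2 * deriv R x ^ 2)) := by
    apply MeasureTheory.setIntegral_mono_on hint2 hint3 measurableSet_Ioo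
    intro x _
    nlinarith [sq_nonneg (R x - 2 * (1 - x) * deriv R x)]
  have split2 : ∫ x in Set.Ioo (1/2:ℝ) 1, (R x ^ 2 / 2 + 2 * ((1 - x) ^ 2 * deriv R x ^ 2))
      = (∫ x in Set.Ioo (1/2:ℝ) 1, R x ^ 2) / 2
        + 2 * ∫ x in Set.Ioo (1/2:ℝ) 1, (1 - x) ^ 2 * deriv R x ^ 2 := by
    have h1 : IntegrableOn (fun x => R x ^ 2 / 2) (Set.Ioo (1/2:ℝ) 1) := intOn (by fun_prop)
    have h2 : IntegrableOn (fun x => 2 * ((1 - x) ^ 2 * deriv R x ^ 2)) (Set.Ioo (1/2:ℝ) 1) :=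
      intOn (by fun_prop)
    rw [MeasureTheory.integral_add h1 h2, MeasureTheory.integral_const_mul,
      MeasureTheory.integral_div]
  rw [split] at key
  rw [split2] at hmono
  linarith

lemma mid_bound (hR : ContDiff ℝ 1 R) :
    R (1/2:ℝ) ^ 2 ≤ 8 * (∫ x in Set.Ioo (1/4:ℝ) (1/2), R x ^ 2)
      + (1/2) * ∫ x in Set.Ioo (1/4:ℝ) (1/2), deriv R x ^ 2 := by
  have hRc : Continuous R := hR.continuous
  have hR' : Continuous (deriv R) := hR.continuous_deriv le_rfl
  have hRd : ∀ x : ℝ, HasDerivAt R (deriv R x) x :=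
    fun x => ((hR.differentiable one_ne_zero) x).hasDerivAt
  set J := ∫ x in Set.Ioo (1/4:ℝ) (1/2), deriv R x ^ 2 with hJdef
  have hJ0 : 0 ≤ J := MeasureTheory.setIntegral_nonneg measurableSet_Ioo (fun x _ => sq_nonneg _)
  have pointwise : ∀ y ∈ Set.Ioo (1/4:ℝ) (1/2),
      R (1/2:ℝ) ^ 2 ≤ 2 * R y ^ 2 + (1/2) * J := by
    intro y hy
    obtain ⟨hy1, hy2⟩ := hy
    have hle : y ≤ (1/2:ℝ) := hy2.le
    have hfy : ∫ x in Set.Ioo y (1/2), deriv R x = R (1/2) - R y :=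
      ftc hle (fun x _ => hRd x) (hR'.continuousOn)
    have hcs := cs (u := fun _ => (1:ℝ)) (v := deriv R) hle
      continuousOn_const (hR'.continuousOn)
    have e1 : ∫ x in Set.Ioo y (1/2:ℝ), (fun _ => (1:ℝ)) x * deriv R x
        = R (1/2) - R y := by
      simp only [one_mul]; exact hfy
    have e2 : ∫ x in Set.Ioo y (1/2:ℝ), ((fun _ => (1:ℝ)) x) ^ 2 = 1/2 - y := by
      simp only [one_pow]
      rw [MeasureTheory.setIntegral_const, Real.volume_real_Ioo_of_le (by linarith)]
      simp
    rw [e1, e2] at hcs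
    have hJle : ∫ x in Set.Ioo y (1/2:ℝ), deriv R x ^ 2 ≤ J := by
      apply MeasureTheory.setIntegral_mono_set (intOn (by fun_prop))
        (Filter.Eventually.of_forall (fun x => sq_nonneg _))
        (HasSubset.Subset.eventuallyLE (Set.Ioo_subset_Ioo hy1.le le_rfl))
    have hnn : 0 ≤ ∫ x in Set.Ioo y (1/2:ℝ), deriv R x ^ 2 :=
      MeasureTheory.setIntegral_nonneg measurableSet_Ioo (fun x _ => sq_nonneg _)
    have h3 : (R (1/2) - R y) ^ 2 ≤ (1/4) * J := by
      calc (R (1/2) - R y) ^ 2 ≤ (1/2 - y) * ∫ x in Set.Ioo y (1/2:ℝ), deriv R x ^ 2 := hcs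
        _ ≤ (1/4) * J := by
            apply mul_le_mul (by linarith) hJle hnn (by norm_num)
    nlinarith [sq_nonneg (2 * R y - R (1/2)), h3]
  have hconst : IntegrableOn (fun _ : ℝ => R (1/2:ℝ) ^ 2) (Set.Ioo (1/4:ℝ) (1/2)) :=
    intOn continuous_const
  have hrhs : IntegrableOn (fun y => 2 * R y ^ 2 + (1/2) * J) (Set.Ioo (1/4:ℝ) (1/2)) :=
    intOn (by fun_prop)
  have hint := MeasureTheory.setIntegral_mono_on hconst hrhs measurableSet_Ioo pointwise
  have e3 : ∫ _ in Set.Ioo (1/4:ℝ) (1/2), R (1/2:ℝ) ^ 2 = (1/4) * R (1/2:ℝ) ^ 2 := by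
    rw [MeasureTheory.setIntegral_const, Real.volume_real_Ioo_of_le (by norm_num)]
    norm_num
  have e4 : ∫ y in Set.Ioo (1/4:ℝ) (1/2), (2 * R y ^ 2 + (1/2) * J)
      = 2 * (∫ y in Set.Ioo (1/4:ℝ) (1/2), R y ^ 2) + (1/4) * ((1/2) * J) := by
    have h1 : IntegrableOn (fun y => 2 * R y ^ 2) (Set.Ioo (1/4:ℝ) (1/2)) := intOn (by fun_prop)
    have h2 : IntegrableOn (fun _ : ℝ => (1/2) * J) (Set.Ioo (1/4:ℝ) (1/2)) :=
      intOn continuous_const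
    rw [MeasureTheory.integral_add h1 h2, MeasureTheory.integral_const_mul,
      MeasureTheory.setIntegral_const, Real.volume_real_Ioo_of_le (by norm_num)]
    norm_num
  rw [e3, e4] at hint
  linarith

lemma l2_bound (hR : ContDiff ℝ 1 R) :
    ∫ x in Set.Ioo (0:ℝ) 1, R x ^ 2
      ≤ 264 * ∫ x in Set.Ioo (0:ℝ) 1, (min x (1-x)) ^ 2 * (R x ^ 2 + deriv R x ^ 2) := by
  have hRc : Continuous R := hR.continuous
  have hR' : Continuous (deriv R) := hR.continuous_deriv le_rfl
  have hmin : Continuous (fun x : ℝ => min x (1 - x)) :=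
    continuous_id.min (continuous_const.sub continuous_id)
  have hW : Continuous (fun x : ℝ => (min x (1-x)) ^ 2 * (R x ^ 2 + deriv R x ^ 2)) :=
    (hmin.pow 2).mul ((hRc.pow 2).add (hR'.pow 2))
  set W : ℝ → ℝ := fun x => (min x (1-x)) ^ 2 * (R x ^ 2 + deriv R x ^ 2) with hWdef
  set RHS2 := ∫ x in Set.Ioo (0:ℝ) 1, W x with hR2def
  have hWnn : ∀ x, 0 ≤ W x := fun x => by
    apply mul_nonneg (sq_nonneg _); positivity
  have hsplit : ∫ x in Set.Ioo (0:ℝ) 1, R x ^ 2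
      = (∫ x in Set.Ioo (0:ℝ) (1/2), R x ^ 2) + ∫ x in Set.Ioo (1/2:ℝ) 1, R x ^ 2 := by
    rw [integral_Ioo_eq (by norm_num : (0:ℝ) ≤ 1),
      integral_Ioo_eq (by norm_num : (0:ℝ) ≤ 1/2),
      integral_Ioo_eq (by norm_num : (1/2:ℝ) ≤ 1)]
    exact (intervalIntegral.integral_add_adjacent_intervals
      ((hRc.pow 2).intervalIntegrable _ _) ((hRc.pow 2).intervalIntegrable _ _)).symm
  have hsubA : Set.Ioo (0:ℝ) (1/2) ⊆ Set.Ioo (0:ℝ) 1 := Set.Ioo_subset_Ioo le_rfl (by norm_num)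
  have hsubB : Set.Ioo (1/2:ℝ) 1 ⊆ Set.Ioo (0:ℝ) 1 := Set.Ioo_subset_Ioo (by norm_num) le_rfl
  have hsubM : Set.Ioo (1/4:ℝ) (1/2) ⊆ Set.Ioo (0:ℝ) 1 :=
    Set.Ioo_subset_Ioo (by norm_num) (by norm_num)
  have hWext : ∀ s : Set ℝ, s ⊆ Set.Ioo (0:ℝ) 1 →
      (∫ x in s, W x) ≤ RHS2 := by
    intro s hs
    exact MeasureTheory.setIntegral_mono_set (intOn hW)
      (Filter.Eventually.of_forall (fun x => hWnn x)) (HasSubset.Subset.eventuallyLE hs)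
  have sA : ∫ x in Set.Ioo (0:ℝ) (1/2), x ^ 2 * deriv R x ^ 2 ≤ RHS2 := by
    refine le_trans ?_ (hWext _ hsubA)
    apply MeasureTheory.setIntegral_mono_on (intOn (by fun_prop)) (intOn hW) measurableSet_Ioo
    intro x hx
    have hx1 := hx.1
    have hx2 := hx.2
    have hmx : min x (1-x) = x := min_eq_left (by linarith)
    rw [hWdef]
    simp only [hmx]
    nlinarith [sq_nonneg (R x), sq_nonneg x, sq_nonneg (deriv R x)]
  have sB : ∫ x in Set.Ioo (1/2:ℝ) 1, (1-x) ^ 2 * deriv R x ^ 2 ≤ RHS2 := by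
    refine le_trans ?_ (hWext _ hsubB)
    apply MeasureTheory.setIntegral_mono_on (intOn (by fun_prop)) (intOn hW) measurableSet_Ioo
    intro x hx
    have hx1 := hx.1
    have hmx : min x (1-x) = 1 - x := min_eq_right (by linarith)
    rw [hWdef]
    simp only [hmx]
    nlinarith [sq_nonneg (R x), sq_nonneg (1 - x), sq_nonneg (deriv R x)]
  have sM : (∫ x in Set.Ioo (1/4:ℝ) (1/2), (R x ^ 2 + deriv R x ^ 2)) ≤ 16 * RHS2 := by
    have step1 : (∫ x in Set.Ioo (1/4:ℝ) (1/2), (R x ^ 2 + deriv R x ^ 2))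
        ≤ ∫ x in Set.Ioo (1/4:ℝ) (1/2), 16 * W x := by
      apply MeasureTheory.setIntegral_mono_on (intOn (by fun_prop))
        (intOn (continuous_const.mul hW)) measurableSet_Ioo
      intro x hx
      have hx1 := hx.1
      have hx2 := hx.2
      have hmx : min x (1-x) = x := min_eq_left (by linarith)
      rw [hWdef]
      show R x ^ 2 + deriv R x ^ 2 ≤ 16 * ((min x (1-x)) ^ 2 * (R x ^ 2 + deriv R x ^ 2)); rw [hmx]
      nlinarith [mul_nonneg (by nlinarith : (0:ℝ) ≤ 16 * x ^ 2 - 1)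
        (by positivity : (0:ℝ) ≤ R x ^ 2 + deriv R x ^ 2)]
    have step2 : ∫ x in Set.Ioo (1/4:ℝ) (1/2), 16 * W x
        = 16 * ∫ x in Set.Ioo (1/4:ℝ) (1/2), W x := MeasureTheory.integral_const_mul 16 _
    have step3 := hWext _ hsubM
    calc (∫ x in Set.Ioo (1/4:ℝ) (1/2), (R x ^ 2 + deriv R x ^ 2))
        ≤ ∫ x in Set.Ioo (1/4:ℝ) (1/2), 16 * W x := step1
      _ = 16 * ∫ x in Set.Ioo (1/4:ℝ) (1/2), W x := step2
      _ ≤ 16 * RHS2 := by linarith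
  have hMsplit : (∫ x in Set.Ioo (1/4:ℝ) (1/2), (R x ^ 2 + deriv R x ^ 2))
      = (∫ x in Set.Ioo (1/4:ℝ) (1/2), R x ^ 2)
        + ∫ x in Set.Ioo (1/4:ℝ) (1/2), deriv R x ^ 2 :=
    MeasureTheory.integral_add (intOn (hRc.pow 2)) (intOn (hR'.pow 2))
  have hJ0 : 0 ≤ ∫ x in Set.Ioo (1/4:ℝ) (1/2), deriv R x ^ 2 :=
    MeasureTheory.setIntegral_nonneg measurableSet_Ioo (fun x _ => sq_nonneg _)
  have hQ0 : 0 ≤ ∫ x in Set.Ioo (1/4:ℝ) (1/2), R x ^ 2 :=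
    MeasureTheory.setIntegral_nonneg measurableSet_Ioo (fun x _ => sq_nonneg _)
  have hmid := mid_bound hR
  have hmid' : R (1/2:ℝ) ^ 2 ≤ 128 * RHS2 := by nlinarith
  have hA := left_half hR
  have hB := right_half hR
  linarith

end Lp

section Gag

-- pointwise bound for 1/min
lemma inv_min_le {t : ℝ} (ht : 0 < t) (ht1 : t < 1) :
    (min t (1-t))⁻¹ ≤ t⁻¹ + (1-t)⁻¹ := by
  rcases min_cases t (1-t) with ⟨h, _⟩ | ⟨h, _⟩ <;> rw [h]
  · have : 0 ≤ (1-t)⁻¹ := inv_nonneg.mpr (by linarith)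
    linarith
  · have : 0 ≤ t⁻¹ := by positivity
    linarith

lemma int_inv_min {m M : ℝ} (h0 : 0 < m) (hmM : m ≤ M) (hM : M < 1) :
    ∫ t in Set.Ioo m M, (min t (1-t))⁻¹
      ≤ Real.log (M/m) + Real.log ((1-m)/(1-M)) := by
  have hsub : Set.Icc m M ⊆ Set.Ioo 0 1 := fun x hx => ⟨lt_of_lt_of_le h0 hx.1,
    lt_of_le_of_lt hx.2 hM⟩
  have hc1 : ContinuousOn (fun t : ℝ => t⁻¹ + (1-t)⁻¹) (Set.Icc m M) := by
    apply ContinuousOn.add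
    · exact ContinuousOn.inv₀ continuousOn_id (fun x hx => (hsub hx).1.ne')
    · exact ContinuousOn.inv₀ (continuous_const.sub continuous_id).continuousOn
        (fun x hx => by have := (hsub hx).2; intro h; linarith)
  have hcmin : ContinuousOn (fun t : ℝ => (min t (1-t))⁻¹) (Set.Icc m M) := by
    apply ContinuousOn.inv₀ (continuous_id.min (continuous_const.sub continuous_id)).continuousOn
    intro x hx
    have h1 := (hsub hx).1
    have h2 := (hsub hx).2
    have : 0 < min x (1-x) := lt_min h1 (by linarith)
    exact this.ne'
  have step1 : ∫ t in Set.Ioo m M, (min t (1-t))⁻¹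
      ≤ ∫ t in Set.Ioo m M, (t⁻¹ + (1-t)⁻¹) := by
    apply MeasureTheory.setIntegral_mono_on
      (hcmin.integrableOn_Icc.mono_set Set.Ioo_subset_Icc_self)
      (hc1.integrableOn_Icc.mono_set Set.Ioo_subset_Icc_self) measurableSet_Ioo
    intro x hx
    exact inv_min_le (hsub (Set.Ioo_subset_Icc_self hx)).1 (hsub (Set.Ioo_subset_Icc_self hx)).2
  have step2 : ∫ t in Set.Ioo m M, (t⁻¹ + (1-t)⁻¹)
      = (Real.log M - Real.log (1-M)) - (Real.log m - Real.log (1-m)) := by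
    apply ftc hmM
    · intro x hx
      have h1 := (hsub hx).1
      have h2 := (hsub hx).2
      have d1 : HasDerivAt Real.log x⁻¹ x := Real.hasDerivAt_log h1.ne'
      have d2 : HasDerivAt (fun t : ℝ => 1 - t) (-1) x := by
        exact (hasDerivAt_id x).const_sub 1
      have d3 : HasDerivAt (fun t : ℝ => Real.log (1-t)) ((1-x)⁻¹ * (-1)) x :=
        (Real.hasDerivAt_log (by linarith : (1:ℝ) - x ≠ 0)).comp x d2
      have := d1.sub d3
      exact this.congr_deriv (by ring)
    · exact hc1
  have step3 : (Real.log M - Real.log (1-M)) - (Real.log m - Real.log (1-m))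
      = Real.log (M/m) + Real.log ((1-m)/(1-M)) := by
    rw [Real.log_div (by linarith : (0:ℝ) < M).ne' h0.ne',
      Real.log_div (by intro h; linarith [(by linarith : (0:ℝ) < 1-m)] : (1:ℝ)-m ≠ 0)
        (by intro h; linarith [(by linarith : (0:ℝ) < 1-M)] : (1:ℝ)-M ≠ 0)]
    ring
  rw [step2, step3] at step1
  exact step1

variable {R : ℝ → ℝ}

lemma diff_sq_le (hR : ContDiff ℝ 1 R) {m M : ℝ} (h0 : 0 < m) (hmM : m ≤ M) (hM : M < 1) :
    (R M - R m)^2 ≤ (Real.log (M/m) + Real.log ((1-m)/(1-M)))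
      * ∫ t in Set.Ioo m M, (min t (1-t)) * deriv R t ^ 2 := by
  have hR' : Continuous (deriv R) := hR.continuous_deriv le_rfl
  have hRd : ∀ x : ℝ, HasDerivAt R (deriv R x) x :=
    fun x => ((hR.differentiable one_ne_zero) x).hasDerivAt
  have hsub : Set.Icc m M ⊆ Set.Ioo 0 1 := fun x hx => ⟨lt_of_lt_of_le h0 hx.1,
    lt_of_le_of_lt hx.2 hM⟩
  have hminpos : ∀ x ∈ Set.Icc m M, 0 < min x (1-x) := by
    intro x hx
    have h1 := (hsub hx).1
    have h2 := (hsub hx).2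
    exact lt_min h1 (by linarith)
  have hmincont : ContinuousOn (fun x : ℝ => min x (1-x)) (Set.Icc m M) :=
    (continuous_id.min (continuous_const.sub continuous_id)).continuousOn
  set u : ℝ → ℝ := fun x => (Real.sqrt (min x (1-x)))⁻¹ with hu
  set v : ℝ → ℝ := fun x => Real.sqrt (min x (1-x)) * deriv R x with hv
  have hucont : ContinuousOn u (Set.Icc m M) := by
    apply ContinuousOn.inv₀ (hmincont.sqrt)
    intro x hx
    exact (Real.sqrt_pos.mpr (hminpos x hx)).ne'
  have hvcont : ContinuousOn v (Set.Icc m M) := hmincont.sqrt.mul hR'.continuousOn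
  have hftc : ∫ x in Set.Ioo m M, deriv R x = R M - R m :=
    ftc hmM (fun x _ => hRd x) hR'.continuousOn
  have huv : ∫ x in Set.Ioo m M, u x * v x = R M - R m := by
    rw [← hftc]
    apply MeasureTheory.setIntegral_congr_fun measurableSet_Ioo
    intro x hx
    have hp := hminpos x (Set.Ioo_subset_Icc_self hx)
    have hs : Real.sqrt (min x (1-x)) ≠ 0 := (Real.sqrt_pos.mpr hp).ne'
    simp only [hu, hv]
    field_simp
  have hu2 : ∫ x in Set.Ioo m M, u x ^ 2 = ∫ x in Set.Ioo m M, (min x (1-x))⁻¹ := by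
    apply MeasureTheory.setIntegral_congr_fun measurableSet_Ioo
    intro x hx
    have hp := hminpos x (Set.Ioo_subset_Icc_self hx)
    simp only [hu]
    rw [← Real.sqrt_inv]
    exact Real.sq_sqrt (by positivity)
  have hv2 : ∫ x in Set.Ioo m M, v x ^ 2
      = ∫ x in Set.Ioo m M, (min x (1-x)) * deriv R x ^ 2 := by
    apply MeasureTheory.setIntegral_congr_fun measurableSet_Ioo
    intro x hx
    have hp := hminpos x (Set.Ioo_subset_Icc_self hx)
    simp only [hv]
    rw [mul_pow, Real.sq_sqrt hp.le]
  have hcs := cs hmM hucont hvcont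
  rw [huv, hu2, hv2] at hcs
  have hv2nn : 0 ≤ ∫ x in Set.Ioo m M, (min x (1-x)) * deriv R x ^ 2 := by
    apply MeasureTheory.setIntegral_nonneg measurableSet_Ioo
    intro x hx
    exact mul_nonneg (hminpos x (Set.Ioo_subset_Icc_self hx)).le (sq_nonneg _)
  calc (R M - R m)^2
      ≤ (∫ x in Set.Ioo m M, (min x (1-x))⁻¹)
        * ∫ x in Set.Ioo m M, (min x (1-x)) * deriv R x ^ 2 := hcs
    _ ≤ (Real.log (M/m) + Real.log ((1-m)/(1-M)))
        * ∫ t in Set.Ioo m M, (min t (1-t)) * deriv R t ^ 2 :=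
        mul_le_mul_of_nonneg_right (int_inv_min h0 hmM hM) hv2nn

lemma intY1 {x t : ℝ} (hx : 0 ≤ x) (hxt : x < t) (ht1 : t ≤ 1) :
    ∫ y in Set.Ioo t 1, ((y - x)^2)⁻¹ = (t - x)⁻¹ - (1 - x)⁻¹ := by
  have hcont : ContinuousOn (fun y : ℝ => ((y - x)^2)⁻¹) (Set.Icc t 1) := by
    apply ContinuousOn.inv₀ (((continuous_id.sub continuous_const).pow 2).continuousOn)
    intro y hy
    have : 0 < y - x := by have := hy.1; linarith
    exact pow_ne_zero 2 this.ne'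
  have := ftc (F := fun y => -((y - x)⁻¹)) ht1 (fun y hy => by
    have hpos : 0 < y - x := by have := hy.1; linarith
    have h : HasDerivAt (fun y : ℝ => y - x) 1 y := (hasDerivAt_id y).sub_const x
    have h2 := (h.inv hpos.ne').neg
    exact h2.congr_deriv (by field_simp)) hcont
  rw [this]; ring

lemma intY2 {y t : ℝ} (ht0 : 0 ≤ t) (hty : t < y) :
    ∫ x in Set.Ioo 0 t, ((y - x)^2)⁻¹ = (y - t)⁻¹ - y⁻¹ := by
  have hcont : ContinuousOn (fun x : ℝ => ((y - x)^2)⁻¹) (Set.Icc 0 t) := by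
    apply ContinuousOn.inv₀ (((continuous_const.sub continuous_id).pow 2).continuousOn)
    intro x hx
    have : 0 < y - x := by have := hx.2; linarith
    exact pow_ne_zero 2 this.ne'
  have := ftc (F := fun x => (y - x)⁻¹) ht0 (fun x hx => by
    have hpos : 0 < y - x := by have := hx.2; linarith
    have h : HasDerivAt (fun x : ℝ => y - x) (0 - 1) x :=
      (hasDerivAt_const x y).sub (hasDerivAt_id x)
    have h2 := h.inv hpos.ne'
    exact h2.congr_deriv (by ring)) hcont
  rw [this]
  norm_num

lemma intY3 {t : ℝ} (ht : 0 < t) (ht1 : t ≤ 1) :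
    ∫ y in Set.Ioo t 1, 2 * Real.sqrt t * (y * Real.sqrt y)⁻¹ ≤ 4 := by
  have hst : (0:ℝ) < Real.sqrt t := Real.sqrt_pos.mpr ht
  have key : ∫ y in Set.Ioo t 1, 2 * Real.sqrt t * (y * Real.sqrt y)⁻¹
      = -(4 * Real.sqrt t * (Real.sqrt 1)⁻¹) - -(4 * Real.sqrt t * (Real.sqrt t)⁻¹) := by
    apply ftc (F := fun y => -(4 * Real.sqrt t * (Real.sqrt y)⁻¹)) ht1
    · intro y hy
      have hy0 : 0 < y := lt_of_lt_of_le ht hy.1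
      have hsy : 0 < Real.sqrt y := Real.sqrt_pos.mpr hy0
      have hs : HasDerivAt Real.sqrt (1/(2 * Real.sqrt y)) y := Real.hasDerivAt_sqrt hy0.ne'
      have h2 := ((hs.inv hsy.ne').const_mul (4 * Real.sqrt t)).neg
      apply h2.congr_deriv
      have hyy : Real.sqrt y ^ 2 = y := Real.sq_sqrt hy0.le
      rw [← hyy]
      field_simp
      rw [Real.sqrt_sq hsy.le]
      ring
    · apply ContinuousOn.mul continuousOn_const
      apply ContinuousOn.inv₀ (continuous_id.mul Real.continuous_sqrt).continuousOn
      intro y hy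
      have hy0 : 0 < y := lt_of_lt_of_le ht hy.1
      have hsy : 0 < Real.sqrt y := Real.sqrt_pos.mpr hy0
      exact (mul_pos hy0 hsy).ne'
  rw [key, Real.sqrt_one]
  have h4 : 4 * Real.sqrt t * (Real.sqrt t)⁻¹ = 4 := by field_simp
  rw [h4]
  nlinarith [Real.sqrt_nonneg t]

lemma sqrt_inv_int {t : ℝ} (ht : 0 < t) :
    ∫ x in Set.Ioo 0 t, (Real.sqrt x)⁻¹ = 2 * Real.sqrt t := by
  have h1 : ∫ x in Set.Ioo 0 t, (Real.sqrt x)⁻¹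
      = ∫ x in Set.Ioo 0 t, x ^ (-(1/2) : ℝ) := by
    apply MeasureTheory.setIntegral_congr_fun measurableSet_Ioo
    intro x hx
    dsimp only
    rw [Real.rpow_neg hx.1.le, Real.sqrt_eq_rpow]
  rw [h1, integral_Ioo_eq ht.le, integral_rpow (Or.inl (by norm_num))]
  rw [Real.zero_rpow (by norm_num)]
  rw [Real.sqrt_eq_rpow]
  norm_num
  ring

lemma intY4 {t : ℝ} (ht : 0 < t) :
    ∫ x in Set.Ioo 0 t, 2 * (Real.sqrt t)⁻¹ * (Real.sqrt x)⁻¹ ≤ 4 := by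
  have hst : (0:ℝ) < Real.sqrt t := Real.sqrt_pos.mpr ht
  rw [MeasureTheory.integral_const_mul, sqrt_inv_int ht]
  have h4 : 2 * (Real.sqrt t)⁻¹ * (2 * Real.sqrt t) = 4 := by field_simp; ring
  rw [h4]

lemma intY5 {t : ℝ} (ht0 : 0 ≤ t) (ht1 : t < 1) :
    ∫ x in Set.Ioo 0 t, 2 * Real.sqrt (1-t) * ((1-x) * Real.sqrt (1-x))⁻¹ ≤ 4 := by
  have h1t : (0:ℝ) < 1 - t := by linarith
  have hst : (0:ℝ) < Real.sqrt (1-t) := Real.sqrt_pos.mpr h1t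
  have key : ∫ x in Set.Ioo 0 t, 2 * Real.sqrt (1-t) * ((1-x) * Real.sqrt (1-x))⁻¹
      = (4 * Real.sqrt (1-t) * (Real.sqrt (1-t))⁻¹)
        - (4 * Real.sqrt (1-t) * (Real.sqrt (1-0))⁻¹) := by
    apply ftc (F := fun x => 4 * Real.sqrt (1-t) * (Real.sqrt (1-x))⁻¹) ht0
    · intro x hx
      have hx1 : 0 < 1 - x := by have := hx.2; linarith
      have hsx : 0 < Real.sqrt (1-x) := Real.sqrt_pos.mpr hx1
      have hs : HasDerivAt (fun x : ℝ => Real.sqrt (1-x))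
          (1/(2 * Real.sqrt (1-x)) * (0-1)) x := by
        exact (Real.hasDerivAt_sqrt hx1.ne').comp x
          ((hasDerivAt_const x (1:ℝ)).sub (hasDerivAt_id x))
      have h2 := (hs.inv hsx.ne').const_mul (4 * Real.sqrt (1-t))
      apply h2.congr_deriv
      have hyy : Real.sqrt (1-x) ^ 2 = 1-x := Real.sq_sqrt hx1.le
      rw [← hyy]
      field_simp
      rw [Real.sqrt_sq hsx.le]
      ring
    · apply ContinuousOn.mul continuousOn_const
      apply ContinuousOn.inv₀
        ((continuous_const.sub continuous_id).mul
          (Real.continuous_sqrt.comp (continuous_const.sub continuous_id))).continuousOn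
      intro x hx
      have hx1 : 0 < 1 - x := by have := hx.2; linarith
      have hsx : 0 < Real.sqrt (1-x) := Real.sqrt_pos.mpr hx1
      exact (mul_pos hx1 hsx).ne'
  rw [key]
  have h4 : 4 * Real.sqrt (1-t) * (Real.sqrt (1-t))⁻¹ = 4 := by field_simp
  rw [h4]
  have h40 : (0:ℝ) ≤ 4 * Real.sqrt (1-t) * (Real.sqrt (1-0))⁻¹ := by positivity
  linarith

lemma intY6 {t : ℝ} (ht0 : 0 ≤ t) (ht1 : t < 1) :
    ∫ y in Set.Ioo t 1, 2 * (Real.sqrt (1-t))⁻¹ * (Real.sqrt (1-y))⁻¹ ≤ 4 := by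
  have h1t : (0:ℝ) < 1 - t := by linarith
  have hst : (0:ℝ) < Real.sqrt (1-t) := Real.sqrt_pos.mpr h1t
  have h1 : ∫ y in Set.Ioo t 1, (Real.sqrt (1-y))⁻¹
      = ∫ y in Set.Ioo t 1, (fun z : ℝ => z ^ (-(1/2) : ℝ)) (1 - y) := by
    apply MeasureTheory.setIntegral_congr_fun measurableSet_Ioo
    intro y hy
    have hy1 : 0 ≤ 1 - y := by have := hy.2; linarith
    dsimp only
    rw [Real.rpow_neg hy1, Real.sqrt_eq_rpow]
  have h2 : ∫ y in Set.Ioo t 1, (fun z : ℝ => z ^ (-(1/2) : ℝ)) (1 - y)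
      = 2 * Real.sqrt (1-t) := by
    rw [integral_Ioo_eq ht1.le]
    rw [intervalIntegral.integral_comp_sub_left (fun z : ℝ => z ^ (-(1/2) : ℝ)) 1]
    norm_num
    rw [integral_rpow (Or.inl (by norm_num))]
    rw [Real.zero_rpow (by norm_num), Real.sqrt_eq_rpow]
    norm_num
    ring
  rw [MeasureTheory.integral_const_mul, h1, h2]
  have h4 : 2 * (Real.sqrt (1-t))⁻¹ * (2 * Real.sqrt (1-t)) = 4 := by field_simp; ring
  rw [h4]

lemma pb1 {t b : ℝ} (ht : 0 < t) (htb : t < b) :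
    Real.log (b/t) * ((b-t)⁻¹ - b⁻¹) ≤ 2 * Real.sqrt t * (b * Real.sqrt b)⁻¹ := by
  have hb : 0 < b := lt_trans ht htb
  have hbt : 0 < b - t := by linarith
  have hts : Real.sqrt t * Real.sqrt t = t := Real.mul_self_sqrt ht.le
  have hbs : Real.sqrt b * Real.sqrt b = b := Real.mul_self_sqrt hb.le
  have hst : 0 < Real.sqrt t := Real.sqrt_pos.mpr ht
  have hsb : 0 < Real.sqrt b := Real.sqrt_pos.mpr hb
  have hfac : (b-t)⁻¹ - b⁻¹ = t * (b * (b-t))⁻¹ := by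
    rw [inv_sub_inv hbt.ne' hb.ne', show b - (b-t) = t by ring, div_eq_mul_inv,
      mul_comm (b-t) b]
  have hlog : Real.log (b/t) ≤ 2 * (b-t) / (Real.sqrt t * Real.sqrt b) := by
    rw [Real.log_div hb.ne' ht.ne']
    exact log_sub_log_le ht htb.le
  have step : Real.log (b/t) * ((b-t)⁻¹ - b⁻¹)
      ≤ (2 * (b-t) / (Real.sqrt t * Real.sqrt b)) * (t * (b * (b-t))⁻¹) := by
    rw [hfac]
    apply mul_le_mul_of_nonneg_right hlog
    positivity
  have heq : (2 * (b-t) / (Real.sqrt t * Real.sqrt b)) * (t * (b * (b-t))⁻¹)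
      = 2 * Real.sqrt t * (b * Real.sqrt b)⁻¹ := by
    field_simp
    linear_combination (-1) * hts
  linarith [step, heq.le, heq.ge]

lemma pb2 {a t : ℝ} (ha : 0 < a) (hat : a < t) (ht1 : t ≤ 1) :
    Real.log (t/a) * ((t-a)⁻¹ - (1-a)⁻¹) ≤ 2 * (Real.sqrt t)⁻¹ * (Real.sqrt a)⁻¹ := by
  have ht : 0 < t := lt_trans ha hat
  have hta : 0 < t - a := by linarith
  have h1a : 0 ≤ 1 - a := by linarith
  have hsa : 0 < Real.sqrt a := Real.sqrt_pos.mpr ha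
  have hst : 0 < Real.sqrt t := Real.sqrt_pos.mpr ht
  have hlognn : 0 ≤ Real.log (t/a) := Real.log_nonneg ((one_le_div ha).mpr hat.le)
  have hfle : (t-a)⁻¹ - (1-a)⁻¹ ≤ (t-a)⁻¹ := by
    have : 0 ≤ (1-a)⁻¹ := inv_nonneg.mpr h1a
    linarith
  have hlog : Real.log (t/a) ≤ 2 * (t-a) / (Real.sqrt a * Real.sqrt t) := by
    rw [Real.log_div ht.ne' ha.ne']
    exact log_sub_log_le ha hat.le
  have step1 : Real.log (t/a) * ((t-a)⁻¹ - (1-a)⁻¹) ≤ Real.log (t/a) * (t-a)⁻¹ :=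
    mul_le_mul_of_nonneg_left hfle hlognn
  have step2 : Real.log (t/a) * (t-a)⁻¹
      ≤ (2 * (t-a) / (Real.sqrt a * Real.sqrt t)) * (t-a)⁻¹ :=
    mul_le_mul_of_nonneg_right hlog (by positivity)
  have heq : (2 * (t-a) / (Real.sqrt a * Real.sqrt t)) * (t-a)⁻¹
      = 2 * (Real.sqrt t)⁻¹ * (Real.sqrt a)⁻¹ := by
    field_simp
  linarith [step1, step2, heq.le]

lemma pb3 {a t : ℝ} (ha0 : 0 ≤ a) (hat : a < t) (ht1 : t < 1) :
    Real.log ((1-a)/(1-t)) * ((t-a)⁻¹ - (1-a)⁻¹)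
      ≤ 2 * Real.sqrt (1-t) * ((1-a) * Real.sqrt (1-a))⁻¹ := by
  have h := pb1 (t := 1-t) (b := 1-a) (by linarith) (by linarith)
  have e : (1-a) - (1-t) = t - a := by ring
  rw [e] at h
  exact h

lemma pb4 {t b : ℝ} (ht0 : 0 ≤ t) (htb : t < b) (hb1 : b < 1) :
    Real.log ((1-t)/(1-b)) * ((b-t)⁻¹ - b⁻¹)
      ≤ 2 * (Real.sqrt (1-t))⁻¹ * (Real.sqrt (1-b))⁻¹ := by
  have h := pb2 (a := 1-b) (t := 1-t) (by linarith) (by linarith) (by linarith)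
  have e : (1-t) - (1-b) = b - t := by ring
  have e2 : (1:ℝ) - (1-b) = b := by ring
  rw [e, e2] at h
  exact h

open ENNReal in
lemma setLIntegral_ofReal_eq {s : Set ℝ} (hs : MeasurableSet s) {ψ : ℝ → ℝ}
    (hint : IntegrableOn ψ s) (hnn : ∀ x ∈ s, 0 ≤ ψ x) :
    ∫⁻ x in s, ENNReal.ofReal (ψ x) = ENNReal.ofReal (∫ x in s, ψ x) :=
  (MeasureTheory.ofReal_integral_eq_lintegral_ofReal hint
    ((ae_restrict_iff' hs).mpr (Filter.Eventually.of_forall hnn))).symm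

lemma setLIntegral_ofReal_le {s : Set ℝ} (hs : MeasurableSet s) {φ ψ : ℝ → ℝ} {r : ℝ}
    (hint : IntegrableOn ψ s) (hnn : ∀ x ∈ s, 0 ≤ ψ x)
    (hle : ∀ x ∈ s, φ x ≤ ψ x) (hr : ∫ x in s, ψ x ≤ r) :
    ∫⁻ x in s, ENNReal.ofReal (φ x) ≤ ENNReal.ofReal r := by
  calc ∫⁻ x in s, ENNReal.ofReal (φ x) ≤ ∫⁻ x in s, ENNReal.ofReal (ψ x) :=
        MeasureTheory.setLIntegral_mono' hs
          (fun x hx => ENNReal.ofReal_le_ofReal (hle x hx))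
    _ = ENNReal.ofReal (∫ x in s, ψ x) := setLIntegral_ofReal_eq hs hint hnn
    _ ≤ ENNReal.ofReal r := ENNReal.ofReal_le_ofReal hr

-- inner integral in y, for fixed x < t
lemma innerY {x t : ℝ} (hx : 0 ≤ x) (hxt : x < t) (ht1 : t ≤ 1) :
    ∫⁻ y in Set.Ioo t 1, ENNReal.ofReal (((y - x)^2)⁻¹)
      = ENNReal.ofReal ((t - x)⁻¹ - (1 - x)⁻¹) := by
  have hcont : ContinuousOn (fun y : ℝ => ((y - x)^2)⁻¹) (Set.Icc t 1) := by
    apply ContinuousOn.inv₀ (((continuous_id.sub continuous_const).pow 2).continuousOn)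
    intro y hy
    have : 0 < y - x := by have := hy.1; linarith
    exact pow_ne_zero 2 this.ne'
  rw [setLIntegral_ofReal_eq measurableSet_Ioo
    (hcont.integrableOn_Icc.mono_set Set.Ioo_subset_Icc_self)
    (fun y _ => by positivity), intY1 hx hxt ht1]

-- inner integral in x, for fixed y > t
lemma innerX {y t : ℝ} (ht0 : 0 ≤ t) (hty : t < y) :
    ∫⁻ x in Set.Ioo 0 t, ENNReal.ofReal (((y - x)^2)⁻¹)
      = ENNReal.ofReal ((y - t)⁻¹ - y⁻¹) := by
  have hcont : ContinuousOn (fun x : ℝ => ((y - x)^2)⁻¹) (Set.Icc 0 t) := by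
    apply ContinuousOn.inv₀ (((continuous_const.sub continuous_id).pow 2).continuousOn)
    intro x hx
    have : 0 < y - x := by have := hx.2; linarith
    exact pow_ne_zero 2 this.ne'
  rw [setLIntegral_ofReal_eq measurableSet_Ioo
    (hcont.integrableOn_Icc.mono_set Set.Ioo_subset_Icc_self)
    (fun x _ => by positivity), intY2 ht0 hty]

lemma measurable_core (c : ℝ) (w : ℝ → ℝ) (hw : Measurable w) :
    Measurable (Function.uncurry fun x y : ℝ =>
      ENNReal.ofReal (w y * (((y - x))^2)⁻¹)) := by
  apply Measurable.ennreal_ofReal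
  exact ((hw.comp measurable_snd).mul
    (((measurable_snd.sub measurable_fst).pow_const 2).inv))

lemma J1bound {t : ℝ} (ht0 : 0 < t) (ht1 : t < 1) :
    ∫⁻ x in Set.Ioo (0:ℝ) t, ∫⁻ y in Set.Ioo t 1,
      ENNReal.ofReal (Real.log (y/t) * (((y - x)^2)⁻¹)) ≤ ENNReal.ofReal 4 := by
  have hmeas : Measurable (Function.uncurry fun x y : ℝ =>
      ENNReal.ofReal (Real.log (y/t) * (((y - x))^2)⁻¹)) :=
    measurable_core t _ (Real.measurable_log.comp (measurable_id.div_const t))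
  rw [MeasureTheory.lintegral_lintegral_swap hmeas.aemeasurable]
  have hbint : IntegrableOn (fun y : ℝ => 2 * Real.sqrt t * (y * Real.sqrt y)⁻¹)
      (Set.Ioo t 1) := by
    have hcont : ContinuousOn (fun y : ℝ => 2 * Real.sqrt t * (y * Real.sqrt y)⁻¹)
        (Set.Icc t 1) := by
      apply ContinuousOn.mul continuousOn_const
      apply ContinuousOn.inv₀ (continuous_id.mul Real.continuous_sqrt).continuousOn
      intro y hy
      have hy0 : 0 < y := lt_of_lt_of_le ht0 hy.1
      have := Real.sqrt_pos.mpr hy0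
      exact (mul_pos hy0 this).ne'
    exact hcont.integrableOn_Icc.mono_set Set.Ioo_subset_Icc_self
  calc ∫⁻ y in Set.Ioo t 1, ∫⁻ x in Set.Ioo (0:ℝ) t,
        ENNReal.ofReal (Real.log (y/t) * (((y - x))^2)⁻¹)
      ≤ ∫⁻ y in Set.Ioo t 1, ENNReal.ofReal (2 * Real.sqrt t * (y * Real.sqrt y)⁻¹) := by
        apply MeasureTheory.setLIntegral_mono' measurableSet_Ioo
        intro y hy
        have hlognn : 0 ≤ Real.log (y/t) := Real.log_nonneg ((one_le_div ht0).mpr hy.1.le)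
        have e1 : ∀ x : ℝ, ENNReal.ofReal (Real.log (y/t) * (((y - x))^2)⁻¹)
            = ENNReal.ofReal (Real.log (y/t)) * ENNReal.ofReal ((((y - x))^2)⁻¹) :=
          fun x => ENNReal.ofReal_mul hlognn
        simp_rw [e1]
        rw [MeasureTheory.lintegral_const_mul' _ _ ENNReal.ofReal_ne_top,
          innerX (le_of_lt ht0) hy.1, ← ENNReal.ofReal_mul hlognn]
        exact ENNReal.ofReal_le_ofReal (pb1 ht0 hy.1)
    _ = ENNReal.ofReal (∫ y in Set.Ioo t 1, 2 * Real.sqrt t * (y * Real.sqrt y)⁻¹) :=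
        setLIntegral_ofReal_eq measurableSet_Ioo hbint
          (fun y hy => by
            have hy0 : 0 < y := lt_trans ht0 hy.1
            have := Real.sqrt_pos.mpr hy0
            positivity)
    _ ≤ ENNReal.ofReal 4 := ENNReal.ofReal_le_ofReal (intY3 ht0 ht1.le)

lemma J2bound {t : ℝ} (ht0 : 0 < t) (ht1 : t < 1) :
    ∫⁻ x in Set.Ioo (0:ℝ) t, ∫⁻ y in Set.Ioo t 1,
      ENNReal.ofReal (Real.log (t/x) * (((y - x)^2)⁻¹)) ≤ ENNReal.ofReal 4 := by
  have hbint : IntegrableOn (fun x : ℝ => 2 * (Real.sqrt t)⁻¹ * (Real.sqrt x)⁻¹)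
      (Set.Ioo 0 t) := by
    have base : IntegrableOn (fun x : ℝ => x ^ (-(1/2) : ℝ)) (Set.Ioo 0 t) :=
      (intervalIntegral.intervalIntegrable_rpow' (by norm_num)).1.mono_set
        Set.Ioo_subset_Ioc_self
    have congr : IntegrableOn (fun x : ℝ => (Real.sqrt x)⁻¹) (Set.Ioo 0 t) := by
      apply base.congr_fun ?_ measurableSet_Ioo
      intro x hx
      dsimp only
      rw [Real.rpow_neg hx.1.le, Real.sqrt_eq_rpow]
    exact congr.const_mul _
  calc ∫⁻ x in Set.Ioo (0:ℝ) t, ∫⁻ y in Set.Ioo t 1,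
        ENNReal.ofReal (Real.log (t/x) * (((y - x)^2)⁻¹))
      ≤ ∫⁻ x in Set.Ioo (0:ℝ) t,
          ENNReal.ofReal (2 * (Real.sqrt t)⁻¹ * (Real.sqrt x)⁻¹) := by
        apply MeasureTheory.setLIntegral_mono' measurableSet_Ioo
        intro x hx
        have hlognn : 0 ≤ Real.log (t/x) := Real.log_nonneg ((one_le_div hx.1).mpr hx.2.le)
        have e1 : ∀ y : ℝ, ENNReal.ofReal (Real.log (t/x) * (((y - x))^2)⁻¹)
            = ENNReal.ofReal (Real.log (t/x)) * ENNReal.ofReal ((((y - x))^2)⁻¹) :=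
          fun y => ENNReal.ofReal_mul hlognn
        simp_rw [e1]
        rw [MeasureTheory.lintegral_const_mul' _ _ ENNReal.ofReal_ne_top,
          innerY hx.1.le hx.2 ht1.le, ← ENNReal.ofReal_mul hlognn]
        exact ENNReal.ofReal_le_ofReal (pb2 hx.1 hx.2 ht1.le)
    _ = ENNReal.ofReal (∫ x in Set.Ioo (0:ℝ) t, 2 * (Real.sqrt t)⁻¹ * (Real.sqrt x)⁻¹) :=
        setLIntegral_ofReal_eq measurableSet_Ioo hbint
          (fun x hx => by
            have := Real.sqrt_nonneg x
            have := Real.sqrt_nonneg t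
            positivity)
    _ ≤ ENNReal.ofReal 4 := ENNReal.ofReal_le_ofReal (intY4 ht0)

lemma J3bound {t : ℝ} (ht0 : 0 < t) (ht1 : t < 1) :
    ∫⁻ x in Set.Ioo (0:ℝ) t, ∫⁻ y in Set.Ioo t 1,
      ENNReal.ofReal (Real.log ((1-x)/(1-t)) * (((y - x)^2)⁻¹)) ≤ ENNReal.ofReal 4 := by
  have hbint : IntegrableOn
      (fun x : ℝ => 2 * Real.sqrt (1-t) * ((1-x) * Real.sqrt (1-x))⁻¹) (Set.Ioo 0 t) := by
    have hcont : ContinuousOn (fun x : ℝ => 2 * Real.sqrt (1-t) * ((1-x) * Real.sqrt (1-x))⁻¹)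
        (Set.Icc 0 t) := by
      apply ContinuousOn.mul continuousOn_const
      apply ContinuousOn.inv₀
        ((continuous_const.sub continuous_id).mul
          (Real.continuous_sqrt.comp (continuous_const.sub continuous_id))).continuousOn
      intro x hx
      have hx1 : 0 < 1 - x := by have := hx.2; linarith
      have := Real.sqrt_pos.mpr hx1
      exact (mul_pos hx1 this).ne'
    exact hcont.integrableOn_Icc.mono_set Set.Ioo_subset_Icc_self
  calc ∫⁻ x in Set.Ioo (0:ℝ) t, ∫⁻ y in Set.Ioo t 1,
        ENNReal.ofReal (Real.log ((1-x)/(1-t)) * (((y - x)^2)⁻¹))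
      ≤ ∫⁻ x in Set.Ioo (0:ℝ) t,
          ENNReal.ofReal (2 * Real.sqrt (1-t) * ((1-x) * Real.sqrt (1-x))⁻¹) := by
        apply MeasureTheory.setLIntegral_mono' measurableSet_Ioo
        intro x hx
        have h1t : (0:ℝ) < 1 - t := by linarith
        have hlognn : 0 ≤ Real.log ((1-x)/(1-t)) :=
          Real.log_nonneg ((one_le_div h1t).mpr (by have := hx.2; linarith))
        have e1 : ∀ y : ℝ, ENNReal.ofReal (Real.log ((1-x)/(1-t)) * (((y - x))^2)⁻¹)
            = ENNReal.ofReal (Real.log ((1-x)/(1-t))) * ENNReal.ofReal ((((y - x))^2)⁻¹) :=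
          fun y => ENNReal.ofReal_mul hlognn
        simp_rw [e1]
        rw [MeasureTheory.lintegral_const_mul' _ _ ENNReal.ofReal_ne_top,
          innerY hx.1.le hx.2 ht1.le, ← ENNReal.ofReal_mul hlognn]
        exact ENNReal.ofReal_le_ofReal (pb3 hx.1.le hx.2 ht1)
    _ = ENNReal.ofReal (∫ x in Set.Ioo (0:ℝ) t,
          2 * Real.sqrt (1-t) * ((1-x) * Real.sqrt (1-x))⁻¹) :=
        setLIntegral_ofReal_eq measurableSet_Ioo hbint
          (fun x hx => by
            have hx1 : 0 < 1 - x := by have := hx.2; linarith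
            have := Real.sqrt_pos.mpr hx1
            positivity)
    _ ≤ ENNReal.ofReal 4 := ENNReal.ofReal_le_ofReal (intY5 ht0.le ht1)

lemma J4bound {t : ℝ} (ht0 : 0 < t) (ht1 : t < 1) :
    ∫⁻ x in Set.Ioo (0:ℝ) t, ∫⁻ y in Set.Ioo t 1,
      ENNReal.ofReal (Real.log ((1-t)/(1-y)) * (((y - x)^2)⁻¹)) ≤ ENNReal.ofReal 4 := by
  have hmeas : Measurable (Function.uncurry fun x y : ℝ =>
      ENNReal.ofReal (Real.log ((1-t)/(1-y)) * (((y - x))^2)⁻¹)) :=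
    measurable_core t _ (Real.measurable_log.comp
      ((measurable_const.div (measurable_const.sub measurable_id))))
  rw [MeasureTheory.lintegral_lintegral_swap hmeas.aemeasurable]
  have hbint : IntegrableOn
      (fun y : ℝ => 2 * (Real.sqrt (1-t))⁻¹ * (Real.sqrt (1-y))⁻¹) (Set.Ioo t 1) := by
    have base : IntervalIntegrable (fun x : ℝ => x ^ (-(1/2) : ℝ)) volume 0 (1-t) :=
      intervalIntegral.intervalIntegrable_rpow' (by norm_num)
    have base2 := base.comp_sub_left 1
    simp only [sub_zero, sub_sub_cancel] at base2
    have base3 : IntegrableOn (fun y : ℝ => (1-y) ^ (-(1/2) : ℝ)) (Set.Ioo t 1) := by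
      exact base2.2.mono_set Set.Ioo_subset_Ioc_self
    have congr : IntegrableOn (fun y : ℝ => (Real.sqrt (1-y))⁻¹) (Set.Ioo t 1) := by
      apply base3.congr_fun ?_ measurableSet_Ioo
      intro y hy
      have : (0:ℝ) ≤ 1 - y := by have := hy.2; linarith
      dsimp only
      rw [Real.rpow_neg this, Real.sqrt_eq_rpow]
    exact congr.const_mul _
  calc ∫⁻ y in Set.Ioo t 1, ∫⁻ x in Set.Ioo (0:ℝ) t,
        ENNReal.ofReal (Real.log ((1-t)/(1-y)) * (((y - x))^2)⁻¹)
      ≤ ∫⁻ y in Set.Ioo t 1,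
          ENNReal.ofReal (2 * (Real.sqrt (1-t))⁻¹ * (Real.sqrt (1-y))⁻¹) := by
        apply MeasureTheory.setLIntegral_mono' measurableSet_Ioo
        intro y hy
        have h1y : (0:ℝ) < 1 - y := by have := hy.2; linarith
        have hlognn : 0 ≤ Real.log ((1-t)/(1-y)) :=
          Real.log_nonneg ((one_le_div h1y).mpr (by have := hy.1; linarith))
        have e1 : ∀ x : ℝ, ENNReal.ofReal (Real.log ((1-t)/(1-y)) * (((y - x))^2)⁻¹)
            = ENNReal.ofReal (Real.log ((1-t)/(1-y))) * ENNReal.ofReal ((((y - x))^2)⁻¹) :=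
          fun x => ENNReal.ofReal_mul hlognn
        simp_rw [e1]
        rw [MeasureTheory.lintegral_const_mul' _ _ ENNReal.ofReal_ne_top,
          innerX (le_of_lt ht0) hy.1, ← ENNReal.ofReal_mul hlognn]
        exact ENNReal.ofReal_le_ofReal (pb4 ht0.le hy.1 hy.2)
    _ = ENNReal.ofReal (∫ y in Set.Ioo t 1,
          2 * (Real.sqrt (1-t))⁻¹ * (Real.sqrt (1-y))⁻¹) :=
        setLIntegral_ofReal_eq measurableSet_Ioo hbint
          (fun y hy => by
            have := Real.sqrt_nonneg (1-y)
            have := Real.sqrt_nonneg (1-t)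
            positivity)
    _ ≤ ENNReal.ofReal 4 := ENNReal.ofReal_le_ofReal (intY6 ht0.le ht1)

lemma measurable_pair {w : ℝ × ℝ → ℝ} (hw : Measurable w) :
    Measurable (fun p : ℝ × ℝ => ENNReal.ofReal (w p * (((p.2 - p.1)^2)⁻¹))) :=
  (hw.mul ((measurable_snd.sub measurable_fst).pow_const 2).inv).ennreal_ofReal

lemma iterBound {t : ℝ} (ht0 : 0 < t) (ht1 : t < 1) :
    ∫⁻ x in Set.Ioo (0:ℝ) t, ∫⁻ y in Set.Ioo t 1,
      ENNReal.ofReal ((Real.log (y/x) + Real.log ((1-x)/(1-y))) * (((y - x)^2)⁻¹))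
      ≤ ENNReal.ofReal 16 := by
  set g1 : ℝ → ℝ → ℝ≥0∞ :=
    fun x y => ENNReal.ofReal (Real.log (y/t) * (((y - x)^2)⁻¹)) with hg1
  set g2 : ℝ → ℝ → ℝ≥0∞ :=
    fun x y => ENNReal.ofReal (Real.log (t/x) * (((y - x)^2)⁻¹)) with hg2
  set g3 : ℝ → ℝ → ℝ≥0∞ :=
    fun x y => ENNReal.ofReal (Real.log ((1-x)/(1-t)) * (((y - x)^2)⁻¹)) with hg3
  set g4 : ℝ → ℝ → ℝ≥0∞ :=
    fun x y => ENNReal.ofReal (Real.log ((1-t)/(1-y)) * (((y - x)^2)⁻¹)) with hg4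
  have m1 : Measurable (fun p : ℝ × ℝ => g1 p.1 p.2) :=
    measurable_pair ((Real.measurable_log.comp (measurable_snd.div_const t)).comp measurable_id)
  have m2 : Measurable (fun p : ℝ × ℝ => g2 p.1 p.2) :=
    measurable_pair (Real.measurable_log.comp ((measurable_const.div measurable_fst)))
  have m3 : Measurable (fun p : ℝ × ℝ => g3 p.1 p.2) :=
    measurable_pair (Real.measurable_log.comp
      (((measurable_const.sub measurable_fst)).div_const (1-t)))
  have m4 : Measurable (fun p : ℝ × ℝ => g4 p.1 p.2) :=
    measurable_pair (Real.measurable_log.comp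
      ((measurable_const.div ((measurable_const.sub measurable_snd)))))
  have pointwise : ∀ x ∈ Set.Ioo (0:ℝ) t, ∀ y ∈ Set.Ioo t 1,
      ENNReal.ofReal ((Real.log (y/x) + Real.log ((1-x)/(1-y))) * (((y - x)^2)⁻¹))
        ≤ g1 x y + g2 x y + g3 x y + g4 x y := by
    intro x hx y hy
    have hx0 := hx.1
    have hxt := hx.2
    have hty := hy.1
    have hy1 := hy.2
    have h1t : (0:ℝ) < 1 - t := by linarith
    have h1y : (0:ℝ) < 1 - y := by linarith
    have h1x : (0:ℝ) < 1 - x := by linarith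
    have hy0 : (0:ℝ) < y := by linarith
    have e1 : Real.log (y/x) = Real.log (y/t) + Real.log (t/x) := by
      rw [← Real.log_mul (by positivity) (by positivity)]
      congr 1
      field_simp
    have e2 : Real.log ((1-x)/(1-y)) = Real.log ((1-x)/(1-t)) + Real.log ((1-t)/(1-y)) := by
      rw [← Real.log_mul (by positivity) (by positivity)]
      congr 1
      field_simp
    have e3 : (Real.log (y/x) + Real.log ((1-x)/(1-y))) * (((y - x)^2)⁻¹)
        = Real.log (y/t) * (((y - x)^2)⁻¹) + Real.log (t/x) * (((y - x)^2)⁻¹)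
          + Real.log ((1-x)/(1-t)) * (((y - x)^2)⁻¹)
          + Real.log ((1-t)/(1-y)) * (((y - x)^2)⁻¹) := by
      rw [e1, e2]; ring
    rw [e3, hg1, hg2, hg3, hg4]
    calc ENNReal.ofReal (Real.log (y/t) * ((y - x)^2)⁻¹ + Real.log (t/x) * ((y - x)^2)⁻¹
            + Real.log ((1-x)/(1-t)) * ((y - x)^2)⁻¹
            + Real.log ((1-t)/(1-y)) * ((y - x)^2)⁻¹)
        ≤ ENNReal.ofReal (Real.log (y/t) * ((y - x)^2)⁻¹ + Real.log (t/x) * ((y - x)^2)⁻¹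
            + Real.log ((1-x)/(1-t)) * ((y - x)^2)⁻¹)
          + ENNReal.ofReal (Real.log ((1-t)/(1-y)) * ((y - x)^2)⁻¹) := ENNReal.ofReal_add_le
      _ ≤ (ENNReal.ofReal (Real.log (y/t) * ((y - x)^2)⁻¹
            + Real.log (t/x) * ((y - x)^2)⁻¹)
          + ENNReal.ofReal (Real.log ((1-x)/(1-t)) * ((y - x)^2)⁻¹))
          + ENNReal.ofReal (Real.log ((1-t)/(1-y)) * ((y - x)^2)⁻¹) := by
          gcongr
          exact ENNReal.ofReal_add_le
      _ ≤ ((ENNReal.ofReal (Real.log (y/t) * ((y - x)^2)⁻¹)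
            + ENNReal.ofReal (Real.log (t/x) * ((y - x)^2)⁻¹))
          + ENNReal.ofReal (Real.log ((1-x)/(1-t)) * ((y - x)^2)⁻¹))
          + ENNReal.ofReal (Real.log ((1-t)/(1-y)) * ((y - x)^2)⁻¹) := by
          gcongr
          exact ENNReal.ofReal_add_le
  have inner_le : ∀ x ∈ Set.Ioo (0:ℝ) t,
      (∫⁻ y in Set.Ioo t 1,
        ENNReal.ofReal ((Real.log (y/x) + Real.log ((1-x)/(1-y))) * (((y - x)^2)⁻¹)))
      ≤ (∫⁻ y in Set.Ioo t 1, g1 x y) + (∫⁻ y in Set.Ioo t 1, g2 x y)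
        + (∫⁻ y in Set.Ioo t 1, g3 x y) + (∫⁻ y in Set.Ioo t 1, g4 x y) := by
    intro x hx
    have hm1 : Measurable (g1 x) := m1.comp measurable_prodMk_left
    have hm2 : Measurable (g2 x) := m2.comp measurable_prodMk_left
    have hm3 : Measurable (g3 x) := m3.comp measurable_prodMk_left
    calc (∫⁻ y in Set.Ioo t 1,
        ENNReal.ofReal ((Real.log (y/x) + Real.log ((1-x)/(1-y))) * (((y - x)^2)⁻¹)))
        ≤ ∫⁻ y in Set.Ioo t 1, (g1 x y + g2 x y + g3 x y + g4 x y) :=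
          MeasureTheory.setLIntegral_mono' measurableSet_Ioo (pointwise x hx)
      _ = (∫⁻ y in Set.Ioo t 1, g1 x y) + (∫⁻ y in Set.Ioo t 1, g2 x y)
        + (∫⁻ y in Set.Ioo t 1, g3 x y) + (∫⁻ y in Set.Ioo t 1, g4 x y) := by
          have hma : Measurable (fun y => g1 x y + g2 x y + g3 x y) := by
            exact (hm1.add hm2).add hm3
          have hmb : Measurable (fun y => g1 x y + g2 x y) := by exact hm1.add hm2
          rw [MeasureTheory.lintegral_add_left hma, MeasureTheory.lintegral_add_left hmb,
            MeasureTheory.lintegral_add_left hm1]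
  have M1 : Measurable (fun x => ∫⁻ y in Set.Ioo t 1, g1 x y) := by
    exact Measurable.lintegral_prod_right' (f := fun p : ℝ × ℝ => g1 p.1 p.2) m1
  have M2 : Measurable (fun x => ∫⁻ y in Set.Ioo t 1, g2 x y) := by
    exact Measurable.lintegral_prod_right' (f := fun p : ℝ × ℝ => g2 p.1 p.2) m2
  have M3 : Measurable (fun x => ∫⁻ y in Set.Ioo t 1, g3 x y) := by
    exact Measurable.lintegral_prod_right' (f := fun p : ℝ × ℝ => g3 p.1 p.2) m3
  have M4 : Measurable (fun x => ∫⁻ y in Set.Ioo t 1, g4 x y) := by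
    exact Measurable.lintegral_prod_right' (f := fun p : ℝ × ℝ => g4 p.1 p.2) m4
  calc ∫⁻ x in Set.Ioo (0:ℝ) t, ∫⁻ y in Set.Ioo t 1,
      ENNReal.ofReal ((Real.log (y/x) + Real.log ((1-x)/(1-y))) * (((y - x)^2)⁻¹))
      ≤ ∫⁻ x in Set.Ioo (0:ℝ) t,
          ((∫⁻ y in Set.Ioo t 1, g1 x y) + (∫⁻ y in Set.Ioo t 1, g2 x y)
          + (∫⁻ y in Set.Ioo t 1, g3 x y) + (∫⁻ y in Set.Ioo t 1, g4 x y)) :=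
        MeasureTheory.setLIntegral_mono' measurableSet_Ioo inner_le
    _ = (∫⁻ x in Set.Ioo (0:ℝ) t, ∫⁻ y in Set.Ioo t 1, g1 x y)
        + (∫⁻ x in Set.Ioo (0:ℝ) t, ∫⁻ y in Set.Ioo t 1, g2 x y)
        + (∫⁻ x in Set.Ioo (0:ℝ) t, ∫⁻ y in Set.Ioo t 1, g3 x y)
        + (∫⁻ x in Set.Ioo (0:ℝ) t, ∫⁻ y in Set.Ioo t 1, g4 x y) := by
        have hMa : Measurable (fun x => (∫⁻ y in Set.Ioo t 1, g1 x y)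
            + (∫⁻ y in Set.Ioo t 1, g2 x y) + (∫⁻ y in Set.Ioo t 1, g3 x y)) := by
          exact (M1.add M2).add M3
        have hMb : Measurable (fun x => (∫⁻ y in Set.Ioo t 1, g1 x y)
            + (∫⁻ y in Set.Ioo t 1, g2 x y)) := by exact M1.add M2
        rw [MeasureTheory.lintegral_add_left hMa, MeasureTheory.lintegral_add_left hMb,
          MeasureTheory.lintegral_add_left M1]
    _ ≤ ENNReal.ofReal 4 + ENNReal.ofReal 4 + ENNReal.ofReal 4 + ENNReal.ofReal 4 := by
        gcongr
        · exact J1bound ht0 ht1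
        · exact J2bound ht0 ht1
        · exact J3bound ht0 ht1
        · exact J4bound ht0 ht1
    _ = ENNReal.ofReal 16 := by
        rw [← ENNReal.ofReal_add (by norm_num) (by norm_num),
          ← ENNReal.ofReal_add (by norm_num) (by norm_num),
          ← ENNReal.ofReal_add (by norm_num) (by norm_num)]
        norm_num

noncomputable def qf (p : ℝ × ℝ) : ℝ :=
  (Real.log (max p.1 p.2 / min p.1 p.2) + Real.log ((1 - min p.1 p.2) / (1 - max p.1 p.2)))
    * (((p.1 - p.2)^2)⁻¹)

lemma qf_meas : Measurable qf := by
  apply Measurable.mul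
  · apply Measurable.add
    · exact Real.measurable_log.comp
        ((measurable_fst.max measurable_snd).div (measurable_fst.min measurable_snd))
    · exact Real.measurable_log.comp
        ((measurable_const.sub (measurable_fst.min measurable_snd)).div
          (measurable_const.sub (measurable_fst.max measurable_snd)))
  · exact ((measurable_fst.sub measurable_snd).pow_const 2).inv

lemma Kbound {t : ℝ} (ht0 : 0 < t) (ht1 : t < 1) :
    ∫⁻ p in (Set.Ioo (0:ℝ) t ×ˢ Set.Ioo t 1) ∪ (Set.Ioo t 1 ×ˢ Set.Ioo (0:ℝ) t),
      ENNReal.ofReal (qf p) ≤ ENNReal.ofReal 32 := by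
  have hdisj : Disjoint (Set.Ioo (0:ℝ) t ×ˢ Set.Ioo t 1) (Set.Ioo t 1 ×ˢ Set.Ioo (0:ℝ) t) := by
    rw [Set.disjoint_left]
    rintro ⟨x, y⟩ h1 h2
    exact absurd h2.1.1 (not_lt.mpr h1.1.2.le)
  rw [MeasureTheory.lintegral_union (measurableSet_Ioo.prod measurableSet_Ioo) hdisj]
  have hK1 : ∫⁻ p in Set.Ioo (0:ℝ) t ×ˢ Set.Ioo t 1, ENNReal.ofReal (qf p)
      ≤ ENNReal.ofReal 16 := by
    have hcongr : ∫⁻ p in Set.Ioo (0:ℝ) t ×ˢ Set.Ioo t 1, ENNReal.ofReal (qf p)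
        = ∫⁻ p in Set.Ioo (0:ℝ) t ×ˢ Set.Ioo t 1, ENNReal.ofReal
          ((Real.log (p.2/p.1) + Real.log ((1-p.1)/(1-p.2))) * (((p.2 - p.1)^2)⁻¹)) := by
      apply MeasureTheory.setLIntegral_congr_fun (measurableSet_Ioo.prod measurableSet_Ioo)
      rintro ⟨x, y⟩ hp
      have hxy : x < y := lt_trans hp.1.2 hp.2.1
      have e1 : max x y = y := max_eq_right hxy.le
      have e2 : min x y = x := min_eq_left hxy.le
      have e3 : (x - y)^2 = (y - x)^2 := by ring
      simp only [qf, e1, e2, e3]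
    rw [hcongr, Measure.volume_eq_prod, ← Measure.prod_restrict]
    rw [MeasureTheory.lintegral_prod _ (by
      apply Measurable.aemeasurable
      apply Measurable.ennreal_ofReal
      apply Measurable.mul
      · apply Measurable.add
        · exact Real.measurable_log.comp (measurable_snd.div measurable_fst)
        · exact Real.measurable_log.comp
            ((measurable_const.sub measurable_fst).div (measurable_const.sub measurable_snd))
      · exact ((measurable_snd.sub measurable_fst).pow_const 2).inv)]
    exact iterBound ht0 ht1
  have hK2 : ∫⁻ p in Set.Ioo t 1 ×ˢ Set.Ioo (0:ℝ) t, ENNReal.ofReal (qf p)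
      ≤ ENNReal.ofReal 16 := by
    have hcongr : ∫⁻ p in Set.Ioo t 1 ×ˢ Set.Ioo (0:ℝ) t, ENNReal.ofReal (qf p)
        = ∫⁻ p in Set.Ioo t 1 ×ˢ Set.Ioo (0:ℝ) t, ENNReal.ofReal
          ((Real.log (p.1/p.2) + Real.log ((1-p.2)/(1-p.1))) * (((p.1 - p.2)^2)⁻¹)) := by
      apply MeasureTheory.setLIntegral_congr_fun (measurableSet_Ioo.prod measurableSet_Ioo)
      rintro ⟨x, y⟩ hp
      have hyx : y < x := lt_trans hp.2.2 hp.1.1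
      have e1 : max x y = x := max_eq_left hyx.le
      have e2 : min x y = y := min_eq_right hyx.le
      simp only [qf, e1, e2]
    rw [hcongr, Measure.volume_eq_prod, ← Measure.prod_restrict]
    have hmeas : Measurable (fun p : ℝ × ℝ => ENNReal.ofReal
        ((Real.log (p.1/p.2) + Real.log ((1-p.2)/(1-p.1))) * (((p.1 - p.2)^2)⁻¹))) := by
      apply Measurable.ennreal_ofReal
      apply Measurable.mul
      · apply Measurable.add
        · exact Real.measurable_log.comp (measurable_fst.div measurable_snd)
        · exact Real.measurable_log.comp
            ((measurable_const.sub measurable_snd).div (measurable_const.sub measurable_fst))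
      · exact ((measurable_fst.sub measurable_snd).pow_const 2).inv
    rw [MeasureTheory.lintegral_prod _ hmeas.aemeasurable]
    have hswap := MeasureTheory.lintegral_lintegral_swap
      (μ := volume.restrict (Set.Ioo t 1)) (ν := volume.restrict (Set.Ioo (0:ℝ) t))
      (f := fun x y => ENNReal.ofReal
        ((Real.log (x/y) + Real.log ((1-y)/(1-x))) * (((x - y)^2)⁻¹)))
      (by exact hmeas.aemeasurable)
    rw [hswap]
    exact iterBound ht0 ht1
  calc (∫⁻ p in Set.Ioo (0:ℝ) t ×ˢ Set.Ioo t 1, ENNReal.ofReal (qf p))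
      + ∫⁻ p in Set.Ioo t 1 ×ˢ Set.Ioo (0:ℝ) t, ENNReal.ofReal (qf p)
      ≤ ENNReal.ofReal 16 + ENNReal.ofReal 16 := add_le_add hK1 hK2
    _ = ENNReal.ofReal 32 := by
        rw [← ENNReal.ofReal_add (by norm_num) (by norm_num)]
        norm_num

lemma gag_bound (hR : ContDiff ℝ 1 R) :
    (∫ p in (Set.Ioo (0:ℝ) 1) ×ˢ (Set.Ioo (0:ℝ) 1), (R p.1 - R p.2) ^ 2 / (p.1 - p.2) ^ 2)
      ≤ 32 * ∫ t in Set.Ioo (0:ℝ) 1, min t (1-t) * deriv R t ^ 2 := by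
  have hRc : Continuous R := hR.continuous
  have hR' : Continuous (deriv R) := hR.continuous_deriv le_rfl
  have hmin : Continuous (fun x : ℝ => min x (1 - x)) :=
    continuous_id.min (continuous_const.sub continuous_id)
  set sq : Set (ℝ × ℝ) := (Set.Ioo (0:ℝ) 1) ×ˢ (Set.Ioo (0:ℝ) 1) with hsq
  have hsqm : MeasurableSet sq := measurableSet_Ioo.prod measurableSet_Ioo
  set D : ℝ → ℝ := fun t => min t (1-t) * deriv R t ^ 2 with hD
  have hDcont : Continuous D := hmin.mul (hR'.pow 2)
  have hDnn : ∀ s ∈ Set.Ioo (0:ℝ) 1, 0 ≤ D s := by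
    intro s hs
    have : 0 < min s (1-s) := lt_min hs.1 (by have := hs.2; linarith)
    exact mul_nonneg this.le (sq_nonneg _)
  set f : ℝ × ℝ → ℝ := fun p => (R p.1 - R p.2) ^ 2 / (p.1 - p.2) ^ 2 with hf
  have hfm : Measurable f := by
    apply Measurable.div
    · exact (((hRc.comp continuous_fst).sub (hRc.comp continuous_snd)).pow 2).measurable
    · exact ((continuous_fst.sub continuous_snd).pow 2).measurable
  have hfnn : ∀ p, 0 ≤ f p := fun p => div_nonneg (sq_nonneg _) (sq_nonneg _)
  set g : (ℝ × ℝ) → ℝ → ℝ≥0∞ := fun p s =>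
    (Set.Ioo (min p.1 p.2) (max p.1 p.2)).indicator (fun u => ENNReal.ofReal (D u)) s
      * ENNReal.ofReal (qf p) with hg
  -- measurability of uncurried g
  set A : Set ((ℝ × ℝ) × ℝ) :=
    {z | min z.1.1 z.1.2 < z.2 ∧ z.2 < max z.1.1 z.1.2} with hA
  have hAm : MeasurableSet A := by
    apply MeasurableSet.inter
    · exact measurableSet_lt ((measurable_fst.comp measurable_fst).min
        (measurable_snd.comp measurable_fst)) measurable_snd
    · exact measurableSet_lt measurable_snd ((measurable_fst.comp measurable_fst).max
        (measurable_snd.comp measurable_fst))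
  have huncurry : Function.uncurry g = fun z : (ℝ × ℝ) × ℝ =>
      A.indicator (fun w => ENNReal.ofReal (D w.2)) z * ENNReal.ofReal (qf z.1) := by
    funext z
    rcases z with ⟨p, s⟩
    have : (Set.Ioo (min p.1 p.2) (max p.1 p.2)).indicator (fun u => ENNReal.ofReal (D u)) s
        = A.indicator (fun w : (ℝ × ℝ) × ℝ => ENNReal.ofReal (D w.2)) (p, s) := by
      by_cases h : min p.1 p.2 < s ∧ s < max p.1 p.2
      · rw [Set.indicator_of_mem (Set.mem_Ioo.mpr h),
          Set.indicator_of_mem (show (p, s) ∈ A from h)]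
      · rw [Set.indicator_of_notMem (fun hc => h (Set.mem_Ioo.mp hc)),
          Set.indicator_of_notMem (show (p, s) ∉ A from h)]
    exact congrArg (· * ENNReal.ofReal (qf p)) this
  have hgm : Measurable (Function.uncurry g) := by
    rw [huncurry]
    exact (((hDcont.measurable.comp measurable_snd).ennreal_ofReal).indicator hAm).mul
      ((qf_meas.comp measurable_fst).ennreal_ofReal)
  -- pointwise bound on sq
  have pointA : ∀ p ∈ sq, ENNReal.ofReal (f p) ≤ ∫⁻ s, g p s := by
    intro p hp
    rcases eq_or_ne p.1 p.2 with he | hne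
    · have : f p = 0 := by rw [hf]; simp [he]
      rw [this]
      simp
    · set m := min p.1 p.2 with hm
      set M := max p.1 p.2 with hM
      have hmM : m < M := min_lt_max.mpr hne
      have h0m : 0 < m := lt_min hp.1.1 hp.2.1
      have hM1 : M < 1 := max_lt hp.1.2 hp.2.2
      have hr0 : ∫⁻ s, g p s
          = (∫⁻ s, (Set.Ioo m M).indicator (fun u => ENNReal.ofReal (D u)) s)
            * ENNReal.ofReal (qf p) :=
        MeasureTheory.lintegral_mul_const' _ _ ENNReal.ofReal_ne_top
      have hr1 : ∫⁻ s, (Set.Ioo m M).indicator (fun u => ENNReal.ofReal (D u)) s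
          = ∫⁻ s in Set.Ioo m M, ENNReal.ofReal (D s) :=
        MeasureTheory.lintegral_indicator measurableSet_Ioo _
      have hr2 : ∫⁻ s in Set.Ioo m M, ENNReal.ofReal (D s)
          = ENNReal.ofReal (∫ s in Set.Ioo m M, D s) :=
        setLIntegral_ofReal_eq measurableSet_Ioo (intOn hDcont)
          (fun s hs => hDnn s ⟨lt_trans h0m hs.1, lt_of_lt_of_le hs.2 (le_of_lt hM1)⟩)
      have hIDnn : 0 ≤ ∫ s in Set.Ioo m M, D s :=
        MeasureTheory.setIntegral_nonneg measurableSet_Ioo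
          (fun s hs => hDnn s ⟨lt_trans h0m hs.1, lt_of_lt_of_le hs.2 (le_of_lt hM1)⟩)
      have hkey := diff_sq_le hR h0m hmM.le hM1
      have hnum : (R p.1 - R p.2) ^ 2 = (R M - R m) ^ 2 := by
        rcases le_total p.1 p.2 with h | h
        · rw [hM, hm, max_eq_right h, min_eq_left h]; ring
        · rw [hM, hm, max_eq_left h, min_eq_right h]
      have hreal : f p ≤ (∫ s in Set.Ioo m M, D s) * qf p := by
        have hqf : qf p = (Real.log (M/m) + Real.log ((1-m)/(1-M))) * (((p.1 - p.2)^2)⁻¹) :=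
          rfl
        rw [hf, hqf]
        calc (R p.1 - R p.2) ^ 2 / (p.1 - p.2) ^ 2
            = (R M - R m) ^ 2 * (((p.1 - p.2)^2)⁻¹) := by rw [hnum, div_eq_mul_inv]
          _ ≤ ((Real.log (M/m) + Real.log ((1-m)/(1-M)))
                * ∫ s in Set.Ioo m M, D s) * (((p.1 - p.2)^2)⁻¹) :=
              mul_le_mul_of_nonneg_right hkey (inv_nonneg.mpr (sq_nonneg _))
          _ = (∫ s in Set.Ioo m M, D s)
              * ((Real.log (M/m) + Real.log ((1-m)/(1-M))) * (((p.1 - p.2)^2)⁻¹)) := by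
              ring
      calc ENNReal.ofReal (f p)
          ≤ ENNReal.ofReal ((∫ s in Set.Ioo m M, D s) * qf p) :=
            ENNReal.ofReal_le_ofReal hreal
        _ = ENNReal.ofReal (∫ s in Set.Ioo m M, D s) * ENNReal.ofReal (qf p) :=
            ENNReal.ofReal_mul hIDnn
        _ = ∫⁻ s, g p s := by rw [hr0, hr1, hr2]
  -- inner bound for fixed s
  have pointD : ∀ s : ℝ, (∫⁻ p in sq, g p s)
      ≤ (Set.Ioo (0:ℝ) 1).indicator
          (fun u => ENNReal.ofReal 32 * ENNReal.ofReal (D u)) s := by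
    intro s
    by_cases hs : s ∈ Set.Ioo (0:ℝ) 1
    · set Es : Set (ℝ × ℝ) := {p | min p.1 p.2 < s ∧ s < max p.1 p.2} with hEs
      have hEsm : MeasurableSet Es := by
        apply MeasurableSet.inter
        · exact measurableSet_lt (measurable_fst.min measurable_snd) measurable_const
        · exact measurableSet_lt measurable_const (measurable_fst.max measurable_snd)
      have hgeq : ∀ p : ℝ × ℝ, g p s
          = Es.indicator (fun p => ENNReal.ofReal (D s) * ENNReal.ofReal (qf p)) p := by
        intro p
        by_cases h : min p.1 p.2 < s ∧ s < max p.1 p.2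
        · rw [hg]
          simp only
          rw [Set.indicator_of_mem (Set.mem_Ioo.mpr h),
            Set.indicator_of_mem (show p ∈ Es from h)]
        · rw [hg]
          simp only
          rw [Set.indicator_of_notMem (fun hc => h (Set.mem_Ioo.mp hc)),
            Set.indicator_of_notMem (show p ∉ Es from h), zero_mul]
      have step1 : ∫⁻ p in sq, g p s
          = ∫⁻ p in Es ∩ sq, ENNReal.ofReal (D s) * ENNReal.ofReal (qf p) := by
        rw [MeasureTheory.lintegral_congr (fun p => hgeq p),
          MeasureTheory.lintegral_indicator hEsm, Measure.restrict_restrict hEsm]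
      have hset : Es ∩ sq = (Set.Ioo (0:ℝ) s ×ˢ Set.Ioo s 1)
          ∪ (Set.Ioo s 1 ×ˢ Set.Ioo (0:ℝ) s) := by
        ext ⟨x, y⟩
        simp only [Set.mem_inter_iff, Set.mem_union, Set.mem_prod, Set.mem_Ioo, hEs,
          Set.mem_setOf_eq, hsq]
        constructor
        · rintro ⟨⟨hmin, hmax⟩, ⟨hx0, hx1⟩, ⟨hy0, hy1⟩⟩
          rcases lt_trichotomy x y with h | h | h
          · left
            rw [min_eq_left h.le] at hmin
            rw [max_eq_right h.le] at hmax
            exact ⟨⟨hx0, hmin⟩, hmax, hy1⟩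
          · exfalso
            subst h
            rw [min_self] at hmin
            rw [max_self] at hmax
            linarith
          · right
            rw [min_eq_right h.le] at hmin
            rw [max_eq_left h.le] at hmax
            exact ⟨⟨hmax, hx1⟩, hy0, hmin⟩
        · rintro (⟨⟨hx0, hxs⟩, hsy, hy1⟩ | ⟨⟨hsx, hx1⟩, hy0, hys⟩)
          · have hxy : x < y := lt_trans hxs hsy
            refine ⟨⟨?_, ?_⟩, ⟨hx0, by linarith⟩, ⟨by linarith, hy1⟩⟩
            · rwa [min_eq_left hxy.le]
            · rwa [max_eq_right hxy.le]
          · have hyx : y < x := lt_trans hys hsx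
            refine ⟨⟨?_, ?_⟩, ⟨by linarith, hx1⟩, ⟨hy0, by linarith⟩⟩
            · rwa [min_eq_right hyx.le]
            · rwa [max_eq_left hyx.le]
      rw [step1, hset, MeasureTheory.lintegral_const_mul' _ _ ENNReal.ofReal_ne_top,
        Set.indicator_of_mem hs]
      rw [mul_comm (ENNReal.ofReal 32) (ENNReal.ofReal (D s))]
      exact mul_le_mul_right (Kbound hs.1 hs.2) _
    · have hzero : ∀ p ∈ sq, g p s = 0 := by
        intro p hp
        rw [hg]
        simp only
        rw [Set.indicator_of_notMem, zero_mul]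
        intro hc
        rcases Set.mem_Ioo.mp hc with ⟨h1, h2⟩
        apply hs
        constructor
        · exact lt_trans (lt_min hp.1.1 hp.2.1) h1
        · exact lt_trans h2 (max_lt hp.1.2 hp.2.2)
      have : ∫⁻ p in sq, g p s = 0 := by
        rw [MeasureTheory.setLIntegral_congr_fun hsqm
          (fun p hp => hzero p hp)]
        exact MeasureTheory.lintegral_zero
      rw [this]
      exact zero_le
  -- assemble
  set IntD := ∫ t in Set.Ioo (0:ℝ) 1, D t with hIntD
  have hIntDnn : 0 ≤ IntD :=
    MeasureTheory.setIntegral_nonneg measurableSet_Ioo hDnn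
  have hmain : (∫⁻ p in sq, ENNReal.ofReal (f p)) ≤ ENNReal.ofReal (32 * IntD) := by
    calc ∫⁻ p in sq, ENNReal.ofReal (f p)
        ≤ ∫⁻ p in sq, ∫⁻ s, g p s := MeasureTheory.setLIntegral_mono' hsqm pointA
      _ = ∫⁻ s, ∫⁻ p in sq, g p s :=
          MeasureTheory.lintegral_lintegral_swap hgm.aemeasurable
      _ ≤ ∫⁻ s, (Set.Ioo (0:ℝ) 1).indicator
            (fun u => ENNReal.ofReal 32 * ENNReal.ofReal (D u)) s :=
          MeasureTheory.lintegral_mono pointD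
      _ = ∫⁻ s in Set.Ioo (0:ℝ) 1, ENNReal.ofReal 32 * ENNReal.ofReal (D s) :=
          MeasureTheory.lintegral_indicator measurableSet_Ioo _
      _ = ENNReal.ofReal 32 * ∫⁻ s in Set.Ioo (0:ℝ) 1, ENNReal.ofReal (D s) :=
          MeasureTheory.lintegral_const_mul' _ _ ENNReal.ofReal_ne_top
      _ = ENNReal.ofReal 32 * ENNReal.ofReal IntD := by
          rw [setLIntegral_ofReal_eq measurableSet_Ioo (intOn hDcont) hDnn]
      _ = ENNReal.ofReal (32 * IntD) := (ENNReal.ofReal_mul (by norm_num)).symm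
  have hrepr : ∫ p in sq, f p = (∫⁻ p in sq, ENNReal.ofReal (f p)).toReal :=
    MeasureTheory.integral_eq_lintegral_of_nonneg_ae
      (Filter.Eventually.of_forall hfnn) hfm.aestronglyMeasurable
  calc ∫ p in sq, f p = (∫⁻ p in sq, ENNReal.ofReal (f p)).toReal := hrepr
    _ ≤ (ENNReal.ofReal (32 * IntD)).toReal :=
        ENNReal.toReal_mono ENNReal.ofReal_ne_top hmain
    _ = 32 * IntD := ENNReal.toReal_ofReal (by positivity)

end Gag

end WSE

/-- The Gagliardo `H^{1/2}(0,1)` seminorm (squared). -/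
noncomputable def gagliardoSq (R : ℝ → ℝ) : ℝ :=
  ∫ p in (Set.Ioo (0:ℝ) 1) ×ˢ (Set.Ioo (0:ℝ) 1), (R p.1 - R p.2) ^ 2 / (p.1 - p.2) ^ 2

/-- Weighted Sobolev embedding `H^1_{d^p}(0,1) ↪ H^{1-p/2}(0,1)` for `p = 1, 2`,
where `d x = min x (1-x)`: for `p = 1` the `H^{1/2}` norm (squared, realized via the
Gagliardo seminorm) of `R` is controlled by `∫ d (R² + R'²)`, and for `p = 2` the
`L²` norm (squared) of `R` is controlled by `∫ d² (R² + R'²)`. -/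
theorem weighted_sobolev_embedding :
    ∃ C > (0:ℝ), ∀ R : ℝ → ℝ, ContDiff ℝ 1 R →
      ((∫ x in Set.Ioo (0:ℝ) 1, (R x) ^ 2) + gagliardoSq R
          ≤ C * ∫ x in Set.Ioo (0:ℝ) 1, (min x (1 - x)) * ((R x) ^ 2 + (deriv R x) ^ 2)) ∧
      ((∫ x in Set.Ioo (0:ℝ) 1, (R x) ^ 2)
          ≤ C * ∫ x in Set.Ioo (0:ℝ) 1, (min x (1 - x)) ^ 2 * ((R x) ^ 2 + (deriv R x) ^ 2)) := by
  refine ⟨264, by norm_num, fun R hR => ?_⟩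
  have hRc : Continuous R := hR.continuous
  have hR' : Continuous (deriv R) := hR.continuous_deriv le_rfl
  have hminc : Continuous (fun x : ℝ => min x (1 - x)) :=
    continuous_id.min (continuous_const.sub continuous_id)
  set RHS1 := ∫ x in Set.Ioo (0:ℝ) 1, (min x (1 - x)) * ((R x) ^ 2 + (deriv R x) ^ 2)
    with hRHS1
  set RHS2 := ∫ x in Set.Ioo (0:ℝ) 1, (min x (1 - x)) ^ 2 * ((R x) ^ 2 + (deriv R x) ^ 2)
    with hRHS2
  have hminnn : ∀ x ∈ Set.Ioo (0:ℝ) 1, 0 ≤ min x (1 - x) := by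
    intro x hx
    exact (lt_min hx.1 (by have := hx.2; linarith)).le
  have hRHS1nn : 0 ≤ RHS1 :=
    MeasureTheory.setIntegral_nonneg measurableSet_Ioo
      (fun x hx => mul_nonneg (hminnn x hx) (by positivity))
  have hL2 := WSE.l2_bound hR
  have hRHS2half : RHS2 ≤ (1/2) * RHS1 := by
    have step : RHS2 ≤ ∫ x in Set.Ioo (0:ℝ) 1,
        (1/2) * ((min x (1 - x)) * ((R x) ^ 2 + (deriv R x) ^ 2)) := by
      apply MeasureTheory.setIntegral_mono_on
        (WSE.intOn ((hminc.pow 2).mul ((hRc.pow 2).add (hR'.pow 2))))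
        (WSE.intOn (continuous_const.mul (hminc.mul ((hRc.pow 2).add (hR'.pow 2)))))
        measurableSet_Ioo
      intro x hx
      have h1 : 0 ≤ min x (1 - x) := hminnn x hx
      have h2 : min x (1 - x) ≤ 1/2 := by
        rcases min_le_iff.mpr (Or.inl (le_refl x)) with _
        rcases le_total x (1 - x) with h | h
        · calc min x (1 - x) ≤ x := min_le_left _ _
            _ ≤ 1/2 := by linarith
        · calc min x (1 - x) ≤ 1 - x := min_le_right _ _
            _ ≤ 1/2 := by linarith
      have h3 : (0:ℝ) ≤ (R x) ^ 2 + (deriv R x) ^ 2 := by positivity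
      calc (min x (1 - x)) ^ 2 * ((R x) ^ 2 + (deriv R x) ^ 2)
          = min x (1 - x) * (min x (1 - x) * ((R x) ^ 2 + (deriv R x) ^ 2)) := by ring
        _ ≤ (1/2) * (min x (1 - x) * ((R x) ^ 2 + (deriv R x) ^ 2)) :=
            mul_le_mul_of_nonneg_right h2 (mul_nonneg h1 h3)
    rw [MeasureTheory.integral_const_mul] at step
    exact step
  have hdr : (∫ t in Set.Ioo (0:ℝ) 1, min t (1 - t) * deriv R t ^ 2) ≤ RHS1 := by
    apply MeasureTheory.setIntegral_mono_on
      (WSE.intOn (hminc.mul (hR'.pow 2)))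
      (WSE.intOn (hminc.mul ((hRc.pow 2).add (hR'.pow 2))))
      measurableSet_Ioo
    intro x hx
    apply mul_le_mul_of_nonneg_left _ (hminnn x hx)
    show deriv R x ^ 2 ≤ R x ^ 2 + deriv R x ^ 2
    nlinarith [sq_nonneg (R x)]
  have hgag : gagliardoSq R ≤ 32 * RHS1 := by
    have h := WSE.gag_bound hR
    have h32 : (32:ℝ) * (∫ t in Set.Ioo (0:ℝ) 1, min t (1 - t) * deriv R t ^ 2)
        ≤ 32 * RHS1 := by linarith
    exact le_trans h h32
  constructor
  · have h1 : (∫ x in Set.Ioo (0:ℝ) 1, (R x) ^ 2) ≤ 132 * RHS1 := by nlinarith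
    linarith
  · exact hL2
end

section
/- Let ρ_0 ∈ C^1([0,1]) with ρ_0(0) = ρ_0(1) = 0. Suppose there exist α > 0 and constants C, C_α > 0 such that |ρ_0'(x)| ≥ C whenever min(x,1−x) ≤ α, and ρ_0(x) ≥ C_α whenever min(x,1−x) ≥ α, and ρ_0 > 0 on (0,1). Then for every u ∈ C^1([0,1]): ‖u'‖_{L^2(0,1)}^2 ≤ C'(‖ρ_0 u''‖_{L^2}^2 + ‖ρ_0' u'‖_{L^2}^2 + ‖ρ_0 u'‖_{L^2}^2) for a constant C' depending only on ρ_0. -/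
open MeasureTheory Set

/-- Converting weighted bounds into an unweighted bound using the physical vacuum
structure: if `|ρ0'| ≥ C` near the boundary and `ρ0 ≥ C_α` in the interior, then
`‖u'‖_{L²}² ≤ C' (‖ρ0 u''‖_{L²}² + ‖ρ0' u'‖_{L²}² + ‖ρ0 u'‖_{L²}²)` for every `u`,
with `C'` depending only on `ρ0`. -/
theorem unweighted_from_weighted (ρ0 : ℝ → ℝ) (α C Cα : ℝ)
    (hα : 0 < α) (hC : 0 < C) (hCα : 0 < Cα)
    (hρ0 : ContDiffOn ℝ 1 ρ0 (Set.Icc 0 1))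
    (h00 : ρ0 0 = 0) (h01 : ρ0 1 = 0)
    (hpos : ∀ x ∈ Set.Ioo (0:ℝ) 1, 0 < ρ0 x)
    (hder : ∀ x ∈ Set.Icc (0:ℝ) 1, min x (1 - x) ≤ α →
      C ≤ |derivWithin ρ0 (Set.Icc 0 1) x|)
    (hint : ∀ x ∈ Set.Icc (0:ℝ) 1, α ≤ min x (1 - x) → Cα ≤ ρ0 x) :
    ∃ C' > (0:ℝ), ∀ u : ℝ → ℝ, ContDiff ℝ 2 u →
      (∫ x in Set.Ioo (0:ℝ) 1, (deriv u x) ^ 2)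
        ≤ C' * ((∫ x in Set.Ioo (0:ℝ) 1, (ρ0 x * iteratedDeriv 2 u x) ^ 2)
            + (∫ x in Set.Ioo (0:ℝ) 1, (derivWithin ρ0 (Set.Icc 0 1) x * deriv u x) ^ 2)
            + (∫ x in Set.Ioo (0:ℝ) 1, (ρ0 x * deriv u x) ^ 2)) := by
  have hud : UniqueDiffOn ℝ (Set.Icc (0:ℝ) 1) := uniqueDiffOn_Icc one_pos
  set ρ' := derivWithin ρ0 (Set.Icc 0 1) with hρ'
  have hρ'c : ContinuousOn ρ' (Set.Icc 0 1) :=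
    hρ0.continuousOn_derivWithin hud le_rfl
  have hρc : ContinuousOn ρ0 (Set.Icc 0 1) := hρ0.continuousOn
  set K := max (C ^ 2)⁻¹ ((Cα ^ 2)⁻¹) with hK
  have hK1 : (C ^ 2)⁻¹ ≤ K := le_max_left _ _
  have hK2 : (Cα ^ 2)⁻¹ ≤ K := le_max_right _ _
  have hKpos : 0 < K := lt_max_of_lt_left (by positivity)
  refine ⟨K, hKpos, ?_⟩
  intro u hu
  have hu'c : Continuous (deriv u) := hu.continuous_deriv one_le_two
  have hInt1 : IntegrableOn (fun x => (deriv u x) ^ 2) (Set.Ioo 0 1) :=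
    ((hu'c.pow 2).integrableOn_Icc).mono_set Set.Ioo_subset_Icc_self
  have hInt2 : IntegrableOn (fun x => (ρ' x * deriv u x) ^ 2) (Set.Ioo 0 1) :=
    (((hρ'c.mul hu'c.continuousOn).pow 2).integrableOn_compact isCompact_Icc).mono_set
      Set.Ioo_subset_Icc_self
  have hInt3 : IntegrableOn (fun x => (ρ0 x * deriv u x) ^ 2) (Set.Ioo 0 1) :=
    (((hρc.mul hu'c.continuousOn).pow 2).integrableOn_compact isCompact_Icc).mono_set
      Set.Ioo_subset_Icc_self
  have hpt : ∀ x ∈ Set.Ioo (0:ℝ) 1,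
      (deriv u x) ^ 2 ≤ K * ((ρ' x * deriv u x) ^ 2 + (ρ0 x * deriv u x) ^ 2) := by
    intro x hx
    have hx' : x ∈ Set.Icc (0:ℝ) 1 := Set.Ioo_subset_Icc_self hx
    rcases le_total (min x (1 - x)) α with h | h
    · have h1 : C ≤ |ρ' x| := hder x hx' h
      have h2 : C ^ 2 ≤ (ρ' x) ^ 2 := by
        calc C ^ 2 ≤ |ρ' x| ^ 2 := pow_le_pow_left₀ hC.le h1 2
          _ = (ρ' x) ^ 2 := sq_abs _
      have hone : 1 ≤ K * C ^ 2 := by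
        have hC2 : (0:ℝ) < C ^ 2 := by positivity
        rw [← inv_mul_cancel₀ hC2.ne']
        exact mul_le_mul_of_nonneg_right hK1 hC2.le
      nlinarith [sq_nonneg (deriv u x), sq_nonneg (ρ0 x * deriv u x),
        mul_le_mul_of_nonneg_right h2 (sq_nonneg (deriv u x)),
        mul_le_mul_of_nonneg_right hone (sq_nonneg (deriv u x)), hKpos.le]
    · have h1 : Cα ≤ ρ0 x := hint x hx' h
      have h2 : Cα ^ 2 ≤ (ρ0 x) ^ 2 := pow_le_pow_left₀ hCα.le h1 2
      have hone : 1 ≤ K * Cα ^ 2 := by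
        have hC2 : (0:ℝ) < Cα ^ 2 := by positivity
        rw [← inv_mul_cancel₀ hC2.ne']
        exact mul_le_mul_of_nonneg_right hK2 hC2.le
      nlinarith [sq_nonneg (deriv u x), sq_nonneg (ρ' x * deriv u x),
        mul_le_mul_of_nonneg_right h2 (sq_nonneg (deriv u x)),
        mul_le_mul_of_nonneg_right hone (sq_nonneg (deriv u x)), hKpos.le]
  have hmono : (∫ x in Set.Ioo (0:ℝ) 1, (deriv u x) ^ 2)
      ≤ ∫ x in Set.Ioo (0:ℝ) 1, K * ((ρ' x * deriv u x) ^ 2 + (ρ0 x * deriv u x) ^ 2) :=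
    setIntegral_mono_on hInt1 ((hInt2.add hInt3).const_mul K) measurableSet_Ioo hpt
  have heq : (∫ x in Set.Ioo (0:ℝ) 1, K * ((ρ' x * deriv u x) ^ 2 + (ρ0 x * deriv u x) ^ 2))
      = K * ((∫ x in Set.Ioo (0:ℝ) 1, (ρ' x * deriv u x) ^ 2)
            + (∫ x in Set.Ioo (0:ℝ) 1, (ρ0 x * deriv u x) ^ 2)) := by
    rw [MeasureTheory.integral_const_mul, MeasureTheory.integral_add hInt2 hInt3]
  have hI1 : 0 ≤ ∫ x in Set.Ioo (0:ℝ) 1, (ρ0 x * iteratedDeriv 2 u x) ^ 2 :=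
    setIntegral_nonneg measurableSet_Ioo fun x _ => sq_nonneg _
  calc (∫ x in Set.Ioo (0:ℝ) 1, (deriv u x) ^ 2)
      ≤ K * ((∫ x in Set.Ioo (0:ℝ) 1, (ρ' x * deriv u x) ^ 2)
            + (∫ x in Set.Ioo (0:ℝ) 1, (ρ0 x * deriv u x) ^ 2)) := heq ▸ hmono
    _ ≤ K * ((∫ x in Set.Ioo (0:ℝ) 1, (ρ0 x * iteratedDeriv 2 u x) ^ 2)
            + (∫ x in Set.Ioo (0:ℝ) 1, (ρ' x * deriv u x) ^ 2)
            + (∫ x in Set.Ioo (0:ℝ) 1, (ρ0 x * deriv u x) ^ 2)) := by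
        apply mul_le_mul_of_nonneg_left _ hKpos.le
        linarith
end
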